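/- arXiv:1709.02182 — 6 statements merged into one kernel-verified Lean document; each statement's English description precedes it below -/
import Mathlib

section
/- Let $a<b$, $k>0$, $0<\lambda\le\pi/2$, $n\in\mathbb{N}$, $\epsilon\in J_n=[\,k((b-a)/((n+1)\pi-\lambda))^2,\; k((b-a)/(n\pi+\lambda))^2\,]$, let $f:[a,b]\to\mathbb{R}$ be continuously differentiable, and let $y_\epsilon$ be the solution of $\epsilon y''+ky=f(t)$ on $[a,b]$ with $y'(a)=y'(b)=0$. Then for every $t_0\in[a,b]$, $\left|y_\epsilon(t_0)-\frac{f(t_0)}{k}\right|\le\frac{1}{k\sin\lambda}\left|\int_a^b\sin[\sqrt{k/\epsilon}(b-s)]\,f'(s)\,ds\right|+\frac{1}{k}\left|\int_a^{t_0}\cos[\sqrt{k/\epsilon}(t_0-s)]\,f'(s)\,ds\right|$. -/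
open Real Set

/-- `y` (with first and second derivatives `y'`, `y''` on `[a,b]`) is a twice
continuously differentiable solution of the Neumann problem
`ε y'' + k y = f(t)` on `[a,b]`, `y'(a) = y'(b) = 0`. -/
def IsNeumannSolution (a b k ε : ℝ) (f y y' y'' : ℝ → ℝ) : Prop :=
  (∀ t ∈ Icc a b, HasDerivWithinAt y (y' t) (Icc a b) t) ∧
  (∀ t ∈ Icc a b, HasDerivWithinAt y' (y'' t) (Icc a b) t) ∧
  ContinuousOn y'' (Icc a b) ∧
  (∀ t ∈ Icc a b, ε * y'' t + k * y t = f t) ∧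
  y' a = 0 ∧ y' b = 0

lemma ftc_aux {a b c : ℝ} (hac : a ≤ c) (hcb : c ≤ b) (G g : ℝ → ℝ)
    (hG : ∀ t ∈ Icc a b, HasDerivWithinAt G (g t) (Icc a b) t)
    (hg : ContinuousOn g (Icc a b)) : ∫ s in a..c, g s = G c - G a := by
  have hsub : Icc a c ⊆ Icc a b := Icc_subset_Icc le_rfl hcb
  apply intervalIntegral.integral_eq_sub_of_hasDeriv_right_of_le hac
  · exact fun t ht => ((hG t (hsub ht)).continuousWithinAt).mono hsub
  · intro t ht
    have htb : t ∈ Ioo a b := ⟨ht.1, lt_of_lt_of_le ht.2 hcb⟩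
    exact ((hG t (Ioo_subset_Icc_self htb)).hasDerivAt
      (Icc_mem_nhds htb.1 htb.2)).hasDerivWithinAt
  · exact (hg.mono hsub).intervalIntegrable_of_Icc hac

lemma sin_ge_aux {lam x : ℝ} (h1 : 0 < lam) (h2 : lam ≤ π / 2) (hx1 : lam ≤ x) (hx2 : x ≤ π - lam) :
    Real.sin lam ≤ Real.sin x := by
  rcases le_total x (π / 2) with h | h
  · exact Real.sin_le_sin_of_le_of_le_pi_div_two (by linarith [Real.pi_pos]) h hx1
  · rw [← Real.sin_pi_sub x]
    exact Real.sin_le_sin_of_le_of_le_pi_div_two (by linarith [Real.pi_pos]) (by linarith)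
      (by linarith)

/-- for `ε ∈ Jₙ`, continuously differentiable `f` on `[a,b]`, and `y_ε` the
solution of the Neumann problem `ε y'' + k y = f(t)`, `y'(a) = y'(b) = 0`, for every
`t₀ ∈ [a,b]`:
`|y_ε(t₀) - f(t₀)/k| ≤ (1/(k sin λ)) |∫_a^b sin(√(k/ε)(b-s)) f'(s) ds|
                       + (1/k) |∫_a^{t₀} cos(√(k/ε)(t₀-s)) f'(s) ds|`. -/
theorem stmt_8 (a b k lam ε : ℝ) (n : ℕ) (f f' y y' y'' : ℝ → ℝ)
    (hab : a < b) (hk : 0 < k) (hlam : 0 < lam) (hlam' : lam ≤ π / 2)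
    (hε : ε ∈ Icc (k * ((b - a) / ((n + 1) * π - lam)) ^ 2)
      (k * ((b - a) / (n * π + lam)) ^ 2))
    (hf : ∀ t ∈ Icc a b, HasDerivWithinAt f (f' t) (Icc a b) t)
    (hf' : ContinuousOn f' (Icc a b))
    (hy : IsNeumannSolution a b k ε f y y' y'') :
    ∀ t₀ ∈ Icc a b,
      |y t₀ - f t₀ / k| ≤
        (1 / (k * Real.sin lam)) *
            |∫ s in a..b, Real.sin (Real.sqrt (k / ε) * (b - s)) * f' s| +
          (1 / k) * |∫ s in a..t₀, Real.cos (Real.sqrt (k / ε) * (t₀ - s)) * f' s| := by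
  obtain ⟨hy1, hy2, hy3, hode, hya, hyb⟩ := hy
  intro t₀ ht₀
  have hπ := Real.pi_pos
  have hn : (0:ℝ) ≤ n := n.cast_nonneg
  have hd : (0:ℝ) < b - a := by linarith
  have hp1 : (0:ℝ) < n * π + lam := by nlinarith
  have hp2 : (0:ℝ) < (n + 1) * π - lam := by nlinarith
  have hεpos : 0 < ε :=
    lt_of_lt_of_le (mul_pos hk (pow_pos (div_pos hd hp2) 2)) hε.1
  set μ := Real.sqrt (k / ε) with hμdef
  have hμ0 : 0 ≤ μ := Real.sqrt_nonneg _
  have hμ2 : μ ^ 2 = k / ε := Real.sq_sqrt (by positivity)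
  have hk' : ε * μ ^ 2 = k := by rw [hμ2]; field_simp
  have h2 : ε * (n * π + lam) ^ 2 ≤ k * (b - a) ^ 2 := by
    have h := hε.2
    rw [div_pow, ← mul_div_assoc, le_div_iff₀ (by positivity)] at h
    linarith
  have hlow : n * π + lam ≤ μ * (b - a) := by
    have h3 : (n * π + lam) ^ 2 ≤ (k / ε) * (b - a) ^ 2 := by
      rw [div_mul_eq_mul_div, le_div_iff₀ hεpos]; nlinarith
    calc n * π + lam = Real.sqrt ((n * π + lam) ^ 2) := (Real.sqrt_sq hp1.le).symm
      _ ≤ Real.sqrt ((k / ε) * (b - a) ^ 2) := Real.sqrt_le_sqrt h3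
      _ = μ * (b - a) := by rw [Real.sqrt_mul (by positivity), Real.sqrt_sq hd.le]
  have h2' : k * (b - a) ^ 2 ≤ ε * ((n + 1) * π - lam) ^ 2 := by
    have h := hε.1
    rw [div_pow, ← mul_div_assoc, div_le_iff₀ (by positivity)] at h
    linarith
  have hup : μ * (b - a) ≤ (n + 1) * π - lam := by
    have h3 : (k / ε) * (b - a) ^ 2 ≤ ((n + 1) * π - lam) ^ 2 := by
      rw [div_mul_eq_mul_div, div_le_iff₀ hεpos]; nlinarith
    calc μ * (b - a) = Real.sqrt ((k / ε) * (b - a) ^ 2) := by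
          rw [Real.sqrt_mul (by positivity), Real.sqrt_sq hd.le]
      _ ≤ Real.sqrt (((n + 1) * π - lam) ^ 2) := Real.sqrt_le_sqrt h3
      _ = (n + 1) * π - lam := Real.sqrt_sq hp2.le
  have hsl : 0 < Real.sin lam := Real.sin_pos_of_pos_of_lt_pi hlam (by linarith)
  have habs : Real.sin lam ≤ |Real.sin (μ * (b - a))| := by
    have hx : Real.sin (μ * (b - a)) = (-1) ^ n * Real.sin (μ * (b - a) - n * π) := by
      rw [← Real.sin_add_nat_mul_pi]; congr 1; ring
    have hx1 : lam ≤ μ * (b - a) - n * π := by linarith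
    have hx2 : μ * (b - a) - n * π ≤ π - lam := by linarith
    calc Real.sin lam ≤ Real.sin (μ * (b - a) - n * π) := sin_ge_aux hlam hlam' hx1 hx2
      _ ≤ |Real.sin (μ * (b - a) - n * π)| := le_abs_self _
      _ = |Real.sin (μ * (b - a))| := by
          rw [hx, abs_mul, abs_pow, abs_neg, abs_one, one_pow, one_mul]
  -- FTC identities
  have key1 : ∀ t ∈ Icc a b, HasDerivWithinAt
      (fun s => Real.sin (μ * (b - s)) * f s +
        ε * μ * (Real.cos (μ * (b - s)) * y' s - μ * (Real.sin (μ * (b - s)) * y s)))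
      (Real.sin (μ * (b - t)) * f' t) (Icc a b) t := by
    intro t ht
    have hu : HasDerivAt (fun s => μ * (b - s)) (μ * (0 - 1)) t :=
      ((hasDerivAt_const t b).sub (hasDerivAt_id t)).const_mul μ
    have hs := hu.sin
    have hc := hu.cos
    have H := ((hs.hasDerivWithinAt.mul (hf t ht)).add
      (((hc.hasDerivWithinAt.mul (hy2 t ht)).sub
        ((hs.hasDerivWithinAt.mul (hy1 t ht)).const_mul μ)).const_mul (ε * μ)))
    refine H.congr_deriv ?_
    have heq := hode t ht
    linear_combination (μ * Real.cos (μ * (b - t))) * heq +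
      (μ * Real.cos (μ * (b - t)) * y t) * hk'
  have key2 : ∀ t ∈ Icc a b, HasDerivWithinAt
      (fun s => Real.cos (μ * (t₀ - s)) * f s -
        ε * μ * (Real.sin (μ * (t₀ - s)) * y' s + μ * (Real.cos (μ * (t₀ - s)) * y s)))
      (Real.cos (μ * (t₀ - t)) * f' t) (Icc a b) t := by
    intro t ht
    have hu : HasDerivAt (fun s => μ * (t₀ - s)) (μ * (0 - 1)) t :=
      ((hasDerivAt_const t t₀).sub (hasDerivAt_id t)).const_mul μ
    have hs := hu.sin
    have hc := hu.cos
    have H := ((hc.hasDerivWithinAt.mul (hf t ht)).sub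
      (((hs.hasDerivWithinAt.mul (hy2 t ht)).add
        ((hc.hasDerivWithinAt.mul (hy1 t ht)).const_mul μ)).const_mul (ε * μ)))
    refine H.congr_deriv ?_
    have heq := hode t ht
    linear_combination (-(μ * Real.sin (μ * (t₀ - t)))) * heq +
      (-(μ * Real.sin (μ * (t₀ - t)) * y t)) * hk'
  have hg1 : ContinuousOn (fun s => Real.sin (μ * (b - s)) * f' s) (Icc a b) :=
    (Continuous.continuousOn
      (Real.continuous_sin.comp (continuous_const.mul
        (continuous_const.sub continuous_id)))).mul hf'
  have hg2 : ContinuousOn (fun s => Real.cos (μ * (t₀ - s)) * f' s) (Icc a b) :=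
    (Continuous.continuousOn
      (Real.continuous_cos.comp (continuous_const.mul
        (continuous_const.sub continuous_id)))).mul hf'
  have hS := ftc_aux hab.le le_rfl _ _ key1 hg1
  have hI := ftc_aux ht₀.1 ht₀.2 _ _ key2 hg2
  have hSval : (∫ s in a..b, Real.sin (μ * (b - s)) * f' s)
      = Real.sin (μ * (b - a)) * (k * y a - f a) := by
    rw [hS, show μ * (b - b) = 0 by ring, hya, hyb, Real.sin_zero, Real.cos_zero]
    linear_combination (Real.sin (μ * (b - a)) * y a) * hk'
  have hIval : (∫ s in a..t₀, Real.cos (μ * (t₀ - s)) * f' s)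
      = (f t₀ - k * y t₀) - Real.cos (μ * (t₀ - a)) * (f a - k * y a) := by
    rw [hI, show μ * (t₀ - t₀) = 0 by ring, hya, Real.sin_zero, Real.cos_zero]
    linear_combination (Real.cos (μ * (t₀ - a)) * y a - y t₀) * hk'
  set S := ∫ s in a..b, Real.sin (μ * (b - s)) * f' s with hSdef
  set I := ∫ s in a..t₀, Real.cos (μ * (t₀ - s)) * f' s with hIdef
  set A := k * y a - f a with hAdef
  have hAle : |A| ≤ |S| / Real.sin lam := by
    rw [le_div_iff₀ hsl]
    calc |A| * Real.sin lam ≤ |A| * |Real.sin (μ * (b - a))| :=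
          mul_le_mul_of_nonneg_left habs (abs_nonneg _)
      _ = |S| := by rw [hSval, abs_mul, mul_comm]
  have hmain : k * (y t₀ - f t₀ / k) = Real.cos (μ * (t₀ - a)) * A - I := by
    rw [hIval, hAdef]; field_simp; ring
  have hkabs : k * |y t₀ - f t₀ / k| = |Real.cos (μ * (t₀ - a)) * A - I| := by
    rw [← hmain, abs_mul, abs_of_pos hk]
  have hbound : k * |y t₀ - f t₀ / k| ≤ |S| / Real.sin lam + |I| := by
    rw [hkabs]
    calc |Real.cos (μ * (t₀ - a)) * A - I|
        ≤ |Real.cos (μ * (t₀ - a)) * A| + |I| := abs_sub _ _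
      _ = |Real.cos (μ * (t₀ - a))| * |A| + |I| := by rw [abs_mul]
      _ ≤ 1 * |A| + |I| := by
          gcongr
          exact Real.abs_cos_le_one _
      _ ≤ |S| / Real.sin lam + |I| := by rw [one_mul]; linarith
  have hfin : (1 / (k * Real.sin lam)) * |S| + (1 / k) * |I|
      = (|S| / Real.sin lam + |I|) / k := by
    field_simp
  rw [hfin, le_div_iff₀ hk]
  linarith [hbound]
end

section
/- Let $a<b$, $k>0$, $\epsilon>0$, and let $f:[a,b]\to\mathbb{R}$ be three times continuously differentiable with $\mu_2=\sup_{t\in[a,b]}|f'''(t)|$. Then $\left|\int_a^b\sin[\sqrt{k/\epsilon}(b-s)]\,f'(s)\,ds\right|\le\sqrt{\epsilon/k}\,\Big\{|f'(a)|+|f'(b)|+\sqrt{\epsilon/k}\,\big(|f''(a)|+\mu_2(b-a)\big)\Big\}$. -/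
open Real Set

/-- for a three times continuously differentiable `f` on `[a,b]`, with
`μ₂ = sup_{t ∈ [a,b]} |f'''(t)|`,
`|∫_a^b sin(√(k/ε)(b-s)) f'(s) ds|
   ≤ √(ε/k) { |f'(a)| + |f'(b)| + √(ε/k) (|f''(a)| + μ₂ (b-a)) }`. -/
theorem stmt_9 (a b k ε : ℝ) (f f' f'' f''' : ℝ → ℝ)
    (hab : a < b) (hk : 0 < k) (hε : 0 < ε)
    (hf : ∀ t ∈ Icc a b, HasDerivWithinAt f (f' t) (Icc a b) t)
    (hf' : ∀ t ∈ Icc a b, HasDerivWithinAt f' (f'' t) (Icc a b) t)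
    (hf'' : ∀ t ∈ Icc a b, HasDerivWithinAt f'' (f''' t) (Icc a b) t)
    (hf''' : ContinuousOn f''' (Icc a b)) :
    |∫ s in a..b, Real.sin (Real.sqrt (k / ε) * (b - s)) * f' s| ≤
      Real.sqrt (ε / k) *
        (|f' a| + |f' b| +
          Real.sqrt (ε / k) *
            (|f'' a| + sSup ((fun t => |f''' t|) '' Icc a b) * (b - a))) := by
  obtain ⟨ω, hω_def⟩ : ∃ w, Real.sqrt (k / ε) = w := ⟨_, rfl⟩
  obtain ⟨c, hc_def⟩ : ∃ w, Real.sqrt (ε / k) = w := ⟨_, rfl⟩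
  rw [hω_def, hc_def]
  have hω : 0 < ω := hω_def ▸ Real.sqrt_pos.2 (div_pos hk hε)
  have hc : 0 < c := hc_def ▸ Real.sqrt_pos.2 (div_pos hε hk)
  have hωc : ω * c = 1 := by
    rw [← hω_def, ← hc_def, ← Real.sqrt_mul (le_of_lt (div_pos hk hε)),
      show k / ε * (ε / k) = 1 by field_simp]
    exact Real.sqrt_one
  have hc1 : 1 / ω = c := by field_simp [hω.ne']; linarith
  have hc2 : 1 / ω ^ 2 = c ^ 2 := by
    have : (ω * c) ^ 2 = 1 := by rw [hωc]; ring
    field_simp [hω.ne']; nlinarith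
  have huIcc : Set.uIcc a b = Icc a b := uIcc_of_le hab.le
  -- derivative facts for the trigonometric antiderivatives
  have hlin : ∀ s : ℝ, HasDerivAt (fun x => ω * (b - x)) (-ω) s := fun s => by
    simpa using ((hasDerivAt_id s).const_sub b).const_mul ω
  have hcosd : ∀ s : ℝ, HasDerivAt (fun x => Real.cos (ω * (b - x)) / ω)
      (Real.sin (ω * (b - s))) s := fun s => by
    have := ((Real.hasDerivAt_cos (ω * (b - s))).comp s (hlin s)).div_const ω
    refine this.congr_deriv ?_
    field_simp
  have hsind : ∀ s : ℝ, HasDerivAt (fun x => -(Real.sin (ω * (b - x)) / ω ^ 2))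
      (Real.cos (ω * (b - s)) / ω) s := fun s => by
    have := (((Real.hasDerivAt_sin (ω * (b - s))).comp s (hlin s)).div_const (ω ^ 2)).neg
    refine this.congr_deriv ?_
    field_simp [pow_two]
  -- continuity / integrability
  have hcf' : ContinuousOn f' (Icc a b) := fun t ht => (hf' t ht).continuousWithinAt
  have hcf'' : ContinuousOn f'' (Icc a b) := fun t ht => (hf'' t ht).continuousWithinAt
  have hsub : Continuous fun s : ℝ => ω * (b - s) := continuous_const.mul (continuous_const.sub continuous_id)
  have hsin_cont : Continuous fun s : ℝ => Real.sin (ω * (b - s)) := Real.continuous_sin.comp hsub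
  have hcos_cont : Continuous fun s : ℝ => Real.cos (ω * (b - s)) / ω := (Real.continuous_cos.comp hsub).div_const ω
  have hI1 : IntervalIntegrable (fun s => Real.sin (ω * (b - s))) MeasureTheory.volume a b :=
    hsin_cont.intervalIntegrable a b
  have hIf'' : IntervalIntegrable f'' MeasureTheory.volume a b := by
    apply ContinuousOn.intervalIntegrable; rwa [huIcc]
  have hIf''' : IntervalIntegrable f''' MeasureTheory.volume a b := by
    apply ContinuousOn.intervalIntegrable; rwa [huIcc]
  have hIcos : IntervalIntegrable (fun s => Real.cos (ω * (b - s)) / ω)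
      MeasureTheory.volume a b := hcos_cont.intervalIntegrable a b
  -- first integration by parts
  have ibp1 : ∫ s in a..b, f' s * Real.sin (ω * (b - s)) =
      f' b * (Real.cos (ω * (b - b)) / ω) - f' a * (Real.cos (ω * (b - a)) / ω)
        - ∫ s in a..b, f'' s * (Real.cos (ω * (b - s)) / ω) := by
    refine intervalIntegral.integral_mul_deriv_eq_deriv_mul_of_hasDerivWithinAt
      (u := f') (u' := f'') (v := fun x => Real.cos (ω * (b - x)) / ω)
      (v' := fun s => Real.sin (ω * (b - s))) ?_ ?_ hIf'' hI1
    · intro x hx; rw [huIcc] at hx ⊢; exact hf' x hx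
    · intro x hx; exact (hcosd x).hasDerivWithinAt
  -- second integration by parts
  have ibp2 : ∫ s in a..b, f'' s * (Real.cos (ω * (b - s)) / ω) =
      f'' b * -(Real.sin (ω * (b - b)) / ω ^ 2) - f'' a * -(Real.sin (ω * (b - a)) / ω ^ 2)
        - ∫ s in a..b, f''' s * -(Real.sin (ω * (b - s)) / ω ^ 2) := by
    refine intervalIntegral.integral_mul_deriv_eq_deriv_mul_of_hasDerivWithinAt
      (u := f'') (u' := f''') (v := fun x => -(Real.sin (ω * (b - x)) / ω ^ 2))
      (v' := fun s => Real.cos (ω * (b - s)) / ω) ?_ ?_ hIf''' hIcos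
    · intro x hx; rw [huIcc] at hx ⊢; exact hf'' x hx
    · intro x hx; exact (hsind x).hasDerivWithinAt
  -- the supremum bound on |f'''|
  set M := sSup ((fun t => |f''' t|) '' Icc a b) with hM_def
  have hbdd : BddAbove ((fun t => |f''' t|) '' Icc a b) :=
    (isCompact_Icc.image_of_continuousOn hf'''.abs).bddAbove
  have hM : ∀ t ∈ Icc a b, |f''' t| ≤ M := fun t ht =>
    le_csSup hbdd (Set.mem_image_of_mem _ ht)
  have hM0 : 0 ≤ M := le_trans (abs_nonneg _) (hM a ⟨le_refl a, hab.le⟩)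
  -- bound the remainder integral
  set J := ∫ s in a..b, f''' s * -(Real.sin (ω * (b - s)) / ω ^ 2) with hJ_def
  have hJ : |J| ≤ M * c ^ 2 * (b - a) := by
    have h := intervalIntegral.norm_integral_le_of_norm_le_const (C := M * c ^ 2)
      (f := fun s => f''' s * -(Real.sin (ω * (b - s)) / ω ^ 2)) (a := a) (b := b) ?_
    · rw [Real.norm_eq_abs, abs_of_pos (by linarith : (0:ℝ) < b - a)] at h
      exact h
    · intro x hx
      rw [uIoc_of_le hab.le] at hx
      have hx' : x ∈ Icc a b := ⟨hx.1.le, hx.2⟩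
      rw [Real.norm_eq_abs, abs_mul, abs_neg, abs_div]
      have h1 : |Real.sin (ω * (b - x))| ≤ 1 := Real.abs_sin_le_one _
      have h2 : |ω ^ 2| = ω ^ 2 := abs_of_pos (by positivity)
      have h3 : |f''' x| ≤ M := hM x hx'
      calc |f''' x| * (|Real.sin (ω * (b - x))| / |ω ^ 2|)
          ≤ M * (1 / ω ^ 2) := by
            rw [h2]
            apply mul_le_mul h3 _ (by positivity) hM0
            apply div_le_div_of_nonneg_right h1 (by positivity) |>.trans_eq rfl
        _ = M * c ^ 2 := by rw [hc2]
  -- put the pieces together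
  have hrw : (∫ s in a..b, Real.sin (ω * (b - s)) * f' s)
      = ∫ s in a..b, f' s * Real.sin (ω * (b - s)) := by
    simp [mul_comm]
  rw [hrw, ibp1, ibp2]
  simp only [sub_self, mul_zero, Real.cos_zero, Real.sin_zero, zero_div, neg_zero, zero_sub]
  have hcosle : |Real.cos (ω * (b - a))| ≤ 1 := Real.abs_cos_le_one _
  have hsinle : |Real.sin (ω * (b - a))| ≤ 1 := Real.abs_sin_le_one _
  have e1 : |f' b * (1 / ω)| = |f' b| * c := by
    rw [abs_mul, abs_of_pos (by positivity : (0:ℝ) < 1 / ω), hc1]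
  have e2 : |f' a * (Real.cos (ω * (b - a)) / ω)| ≤ |f' a| * c := by
    rw [abs_mul, abs_div, abs_of_pos hω, ← hc1]
    gcongr
  have e3 : |f'' a * -(Real.sin (ω * (b - a)) / ω ^ 2)| ≤ |f'' a| * c ^ 2 := by
    rw [abs_mul, abs_neg, abs_div, abs_of_pos (by positivity : (0:ℝ) < ω ^ 2), ← hc2]
    gcongr
  have key : |f' b * (1 / ω) - f' a * (Real.cos (ω * (b - a)) / ω)
      - (-(f'' a * -(Real.sin (ω * (b - a)) / ω ^ 2)) - J)| ≤
      |f' b * (1 / ω)| + |f' a * (Real.cos (ω * (b - a)) / ω)|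
        + |f'' a * -(Real.sin (ω * (b - a)) / ω ^ 2)| + |J| := by
    calc |f' b * (1 / ω) - f' a * (Real.cos (ω * (b - a)) / ω)
        - (-(f'' a * -(Real.sin (ω * (b - a)) / ω ^ 2)) - J)|
        ≤ |f' b * (1 / ω) - f' a * (Real.cos (ω * (b - a)) / ω)|
          + |(-(f'' a * -(Real.sin (ω * (b - a)) / ω ^ 2)) - J)| := abs_sub _ _
      _ ≤ |f' b * (1 / ω)| + |f' a * (Real.cos (ω * (b - a)) / ω)|
          + (|f'' a * -(Real.sin (ω * (b - a)) / ω ^ 2)| + |J|) := by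
            have := abs_sub (f' b * (1 / ω)) (f' a * (Real.cos (ω * (b - a)) / ω))
            have := abs_sub (-(f'' a * -(Real.sin (ω * (b - a)) / ω ^ 2))) J
            rw [abs_neg] at this
            linarith [abs_sub (f' b * (1 / ω)) (f' a * (Real.cos (ω * (b - a)) / ω)), this]
      _ = _ := by ring
  have goal_eq : c * (|f' a| + |f' b| + c * (|f'' a| + M * (b - a)))
      = |f' a| * c + |f' b| * c + |f'' a| * c ^ 2 + M * c ^ 2 * (b - a) := by ring
  calc |f' b * (1 / ω) - f' a * (Real.cos (ω * (b - a)) / ω)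
      - (-(f'' a * -(Real.sin (ω * (b - a)) / ω ^ 2)) - J)|
      ≤ |f' b * (1 / ω)| + |f' a * (Real.cos (ω * (b - a)) / ω)|
        + |f'' a * -(Real.sin (ω * (b - a)) / ω ^ 2)| + |J| := key
    _ ≤ |f' b| * c + |f' a| * c + |f'' a| * c ^ 2 + M * c ^ 2 * (b - a) := by
        rw [e1]; linarith [e2, e3, hJ]
    _ = c * (|f' a| + |f' b| + c * (|f'' a| + M * (b - a))) := by ring
end

section
/- Let $a<b$, $k>0$, $\epsilon>0$, let $f:[a,b]\to\mathbb{R}$ be three times continuously differentiable with $\mu_1=\sup_{t\in[a,b]}|f''(t)|$ and $\mu_2=\sup_{t\in[a,b]}|f'''(t)|$, and let $t_0\in[a,b]$. Then $\left|\int_a^{t_0}\cos[\sqrt{k/\epsilon}(t_0-s)]\,f'(s)\,ds\right|\le\sqrt{\epsilon/k}\,\Big\{|f'(a)|+\sqrt{\epsilon/k}\,\big(\mu_1+|f''(a)|+\mu_2(b-a)\big)\Big\}$. -/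
open Real Set

lemma my_ibp (a b t₀ : ℝ) (ha : a ≤ t₀) (hb : t₀ ≤ b)
    (u u' g g' : ℝ → ℝ)
    (hu : ∀ t ∈ Icc a b, HasDerivWithinAt u (u' t) (Icc a b) t)
    (hu' : ContinuousOn u' (Icc a b))
    (hg : ∀ s, HasDerivAt g (g' s) s)
    (hgc : Continuous g) (hg'c : Continuous g') :
    ∫ s in a..t₀, u s * g' s = u t₀ * g t₀ - u a * g a - ∫ s in a..t₀, u' s * g s := by
  have hsub : Icc a t₀ ⊆ Icc a b := Icc_subset_Icc le_rfl hb
  have huc : ContinuousOn u (Icc a b) := fun t ht => (hu t ht).continuousWithinAt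
  have h1 : IntervalIntegrable (fun s => u' s * g s) MeasureTheory.volume a t₀ := by
    apply ContinuousOn.intervalIntegrable
    rw [uIcc_of_le ha]
    exact (hu'.mono hsub).mul hgc.continuousOn
  have h2 : IntervalIntegrable (fun s => u s * g' s) MeasureTheory.volume a t₀ := by
    apply ContinuousOn.intervalIntegrable
    rw [uIcc_of_le ha]
    exact (huc.mono hsub).mul hg'c.continuousOn
  have key : ∫ s in a..t₀, (u' s * g s + u s * g' s) = u t₀ * g t₀ - u a * g a := by
    apply intervalIntegral.integral_eq_sub_of_hasDeriv_right_of_le ha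
    · exact (huc.mono hsub).mul hgc.continuousOn
    · intro x hx
      have hx' : x ∈ Icc a b := ⟨hx.1.le, (hx.2.trans_le hb).le⟩
      have hmem : Icc a b ∈ nhds x := Icc_mem_nhds hx.1 (hx.2.trans_le hb)
      exact (((hu x hx').hasDerivAt hmem).mul (hg x)).hasDerivWithinAt
    · exact h1.add h2
  rw [intervalIntegral.integral_add h1 h2] at key
  linarith

/-- for a three times continuously differentiable `f` on `[a,b]`, with
`μ₁ = sup_{t ∈ [a,b]} |f''(t)|` and `μ₂ = sup_{t ∈ [a,b]} |f'''(t)|`, and `t₀ ∈ [a,b]`,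
`|∫_a^{t₀} cos(√(k/ε)(t₀-s)) f'(s) ds|
   ≤ √(ε/k) { |f'(a)| + √(ε/k) (μ₁ + |f''(a)| + μ₂ (b-a)) }`. -/
theorem stmt_10 (a b k ε t₀ : ℝ) (f f' f'' f''' : ℝ → ℝ)
    (hab : a < b) (hk : 0 < k) (hε : 0 < ε)
    (hf : ∀ t ∈ Icc a b, HasDerivWithinAt f (f' t) (Icc a b) t)
    (hf' : ∀ t ∈ Icc a b, HasDerivWithinAt f' (f'' t) (Icc a b) t)
    (hf'' : ∀ t ∈ Icc a b, HasDerivWithinAt f'' (f''' t) (Icc a b) t)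
    (hf''' : ContinuousOn f''' (Icc a b)) (ht₀ : t₀ ∈ Icc a b) :
    |∫ s in a..t₀, Real.cos (Real.sqrt (k / ε) * (t₀ - s)) * f' s| ≤
      Real.sqrt (ε / k) *
        (|f' a| +
          Real.sqrt (ε / k) *
            (sSup ((fun t => |f'' t|) '' Icc a b) + |f'' a| +
              sSup ((fun t => |f''' t|) '' Icc a b) * (b - a))) := by
  obtain ⟨hat₀, ht₀b⟩ := ht₀
  set ω := Real.sqrt (k / ε) with hωdef
  have hω : 0 < ω := Real.sqrt_pos.2 (div_pos hk hε)
  set A := 1 / ω with hAdef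
  have hA0 : 0 < A := by positivity
  have hAeq : Real.sqrt (ε / k) = A := by
    rw [hAdef, hωdef, one_div, ← Real.sqrt_inv]
    congr 1
    field_simp
  -- continuity facts
  have hcf'' : ContinuousOn f'' (Icc a b) := fun t ht => (hf'' t ht).continuousWithinAt
  -- trig derivative facts
  have hθ : ∀ s : ℝ, HasDerivAt (fun s : ℝ => ω * (t₀ - s)) (-ω) s := by
    intro s
    have := ((hasDerivAt_id s).const_sub t₀).const_mul ω
    refine this.congr_deriv ?_
    ring
  have hg1 : ∀ s, HasDerivAt (fun s => -A * Real.sin (ω * (t₀ - s)))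
      (Real.cos (ω * (t₀ - s))) s := by
    intro s
    have h := ((hθ s).sin).const_mul (-A)
    refine h.congr_deriv ?_
    rw [hAdef]
    field_simp
  have hg2 : ∀ s, HasDerivAt (fun s => A * Real.cos (ω * (t₀ - s)))
      (Real.sin (ω * (t₀ - s))) s := by
    intro s
    have h := ((hθ s).cos).const_mul A
    refine h.congr_deriv ?_
    rw [hAdef]
    field_simp
  have hcg1 : Continuous (fun s => -A * Real.sin (ω * (t₀ - s))) := by fun_prop
  have hcg2 : Continuous (fun s => A * Real.cos (ω * (t₀ - s))) := by fun_prop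
  have hccos : Continuous (fun s => Real.cos (ω * (t₀ - s))) := by fun_prop
  have hcsin : Continuous (fun s => Real.sin (ω * (t₀ - s))) := by fun_prop
  have eq1 := my_ibp a b t₀ hat₀ ht₀b f' f'' _ _ hf' hcf'' hg1 hcg1 hccos
  have eq2 := my_ibp a b t₀ hat₀ ht₀b f'' f''' _ _ hf'' hf''' hg2 hcg2 hcsin
  set S := Real.sin (ω * (t₀ - a)) with hSdef
  set C := Real.cos (ω * (t₀ - a)) with hCdef
  set J := ∫ s in a..t₀, f''' s * Real.cos (ω * (t₀ - s)) with hJdef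
  have hpull1 : (∫ s in a..t₀, f'' s * (-A * Real.sin (ω * (t₀ - s)))) =
      -A * ∫ s in a..t₀, f'' s * Real.sin (ω * (t₀ - s)) := by
    rw [← intervalIntegral.integral_const_mul]
    apply intervalIntegral.integral_congr
    intro s _
    ring
  have hpull2 : (∫ s in a..t₀, f''' s * (A * Real.cos (ω * (t₀ - s)))) = A * J := by
    rw [hJdef, ← intervalIntegral.integral_const_mul]
    apply intervalIntegral.integral_congr
    intro s _
    ring
  have hgoalI : (∫ s in a..t₀, Real.cos (ω * (t₀ - s)) * f' s) =
      A * (f' a * S) + A * (A * (f'' t₀ - C * f'' a - J)) := by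
    rw [show (∫ s in a..t₀, Real.cos (ω * (t₀ - s)) * f' s) =
        ∫ s in a..t₀, f' s * Real.cos (ω * (t₀ - s)) from
      intervalIntegral.integral_congr fun s _ => mul_comm _ _]
    rw [eq1, hpull1, eq2, hpull2]
    simp only [sub_self, mul_zero, Real.sin_zero, Real.cos_zero, mul_one]
    ring
  -- sup bounds
  set μ₁ := sSup ((fun t => |f'' t|) '' Icc a b) with hμ₁def
  set μ₂ := sSup ((fun t => |f''' t|) '' Icc a b) with hμ₂def
  have hbd₁ : BddAbove ((fun t => |f'' t|) '' Icc a b) :=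
    (isCompact_Icc.image_of_continuousOn hcf''.abs).bddAbove
  have hbd₂ : BddAbove ((fun t => |f''' t|) '' Icc a b) :=
    (isCompact_Icc.image_of_continuousOn hf'''.abs).bddAbove
  have hμ₁ : |f'' t₀| ≤ μ₁ := le_csSup hbd₁ ⟨t₀, ⟨hat₀, ht₀b⟩, rfl⟩
  have hμ₂' : ∀ s ∈ Icc a b, |f''' s| ≤ μ₂ := fun s hs => le_csSup hbd₂ ⟨s, hs, rfl⟩
  have hμ₂0 : 0 ≤ μ₂ := le_trans (abs_nonneg _) (hμ₂' a ⟨le_rfl, hab.le⟩)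
  have hJ : |J| ≤ μ₂ * (b - a) := by
    have h := intervalIntegral.norm_integral_le_of_norm_le_const (C := μ₂)
      (f := fun s => f''' s * Real.cos (ω * (t₀ - s))) (a := a) (b := t₀) ?_
    · rw [hJdef]
      refine h.trans ?_
      rw [abs_of_nonneg (by linarith : (0:ℝ) ≤ t₀ - a)]
      have : t₀ - a ≤ b - a := by linarith
      nlinarith
    · intro x hx
      rw [uIoc_of_le hat₀] at hx
      have hx' : x ∈ Icc a b := ⟨hx.1.le, hx.2.trans ht₀b⟩
      rw [Real.norm_eq_abs, abs_mul]
      calc |f''' x| * |Real.cos (ω * (t₀ - x))| ≤ μ₂ * 1 := by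
            apply mul_le_mul (hμ₂' x hx') (abs_cos_le_one _) (abs_nonneg _) hμ₂0
        _ = μ₂ := mul_one _
  have hS : |S| ≤ 1 := abs_sin_le_one _
  have hC : |C| ≤ 1 := abs_cos_le_one _
  rw [hAeq, hgoalI]
  have habs : ∀ x y : ℝ, |x - y| ≤ |x| + |y| := fun x y => by
    rw [sub_eq_add_neg]
    exact (abs_add_le _ _).trans (by rw [abs_neg])
  have hinner : |f'' t₀ - C * f'' a - J| ≤ μ₁ + |f'' a| + μ₂ * (b - a) := by
    have e1 := habs (f'' t₀ - C * f'' a) J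
    have e2 := habs (f'' t₀) (C * f'' a)
    have e3 : |C * f'' a| ≤ |f'' a| := by
      rw [abs_mul]
      exact mul_le_of_le_one_left (abs_nonneg _) hC
    linarith
  have houter : |f' a * S| ≤ |f' a| := by
    rw [abs_mul]
    exact mul_le_of_le_one_right (abs_nonneg _) hS
  have b1 : |A * (f' a * S)| ≤ A * |f' a| := by
    rw [abs_mul, abs_of_nonneg hA0.le]
    exact mul_le_mul_of_nonneg_left houter hA0.le
  have b2 : |A * (A * (f'' t₀ - C * f'' a - J))| ≤
      A * (A * (μ₁ + |f'' a| + μ₂ * (b - a))) := by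
    rw [abs_mul, abs_mul, abs_of_nonneg hA0.le]
    exact mul_le_mul_of_nonneg_left (mul_le_mul_of_nonneg_left hinner hA0.le) hA0.le
  calc |A * (f' a * S) + A * (A * (f'' t₀ - C * f'' a - J))|
      ≤ |A * (f' a * S)| + |A * (A * (f'' t₀ - C * f'' a - J))| := abs_add_le _ _
    _ ≤ A * |f' a| + A * (A * (μ₁ + |f'' a| + μ₂ * (b - a))) := add_le_add b1 b2
    _ = A * (|f' a| + A * (μ₁ + |f'' a| + μ₂ * (b - a))) := by ring
end

section
/- (A priori estimate) Let $a<b$, $k>0$, $0<\lambda\le\pi/2$, $n\in\mathbb{N}$, $\epsilon\in J_n=[\,k((b-a)/((n+1)\pi-\lambda))^2,\; k((b-a)/(n\pi+\lambda))^2\,]$, let $f:[a,b]\to\mathbb{R}$ be three times continuously differentiable with $\mu_1=\sup_{t\in[a,b]}|f''(t)|$ and $\mu_2=\sup_{t\in[a,b]}|f'''(t)|$, and let $y_\epsilon$ be the solution of $\epsilon y''+ky=f(t)$ on $[a,b]$ with $y'(a)=y'(b)=0$. Then for every $t_0\in[a,b]$: $\left|y_\epsilon(t_0)-\frac{f(t_0)}{k}\right|\le\frac{1}{k\sin\lambda}\sqrt{\epsilon/k}\Big\{|f'(a)|+|f'(b)|+\sqrt{\epsilon/k}\big(|f''(a)|+\mu_2(b-a)\big)\Big\}+\frac{1}{k}\sqrt{\epsilon/k}\Big\{|f'(a)|+\sqrt{\epsilon/k}\big(\mu_1+|f''(a)|+\mu_2(b-a)\big)\Big\}$.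 -/
open Real Set

lemma ftc_aux_s11 {a b c d : ℝ} (hc : a ≤ c) (hcd : c ≤ d) (hd : d ≤ b)
    {u u' : ℝ → ℝ}
    (hu : ∀ t ∈ Icc a b, HasDerivWithinAt u (u' t) (Icc a b) t)
    (hu' : ContinuousOn u' (Icc a b)) :
    ∫ s in c..d, u' s = u d - u c := by
  have hsub : Icc c d ⊆ Icc a b := Icc_subset_Icc hc hd
  apply intervalIntegral.integral_eq_sub_of_hasDeriv_right_of_le hcd
  · exact fun t ht => ((hu t (hsub ht)).continuousWithinAt).mono hsub
  · intro t ht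
    have h1 : a < t := lt_of_le_of_lt hc ht.1
    have h2 : t < b := lt_of_lt_of_le ht.2 hd
    exact ((hu t ⟨h1.le, h2.le⟩).hasDerivAt (Icc_mem_nhds h1 h2)).hasDerivWithinAt
  · exact (hu'.mono (by rw [uIcc_of_le hcd]; exact hsub)).intervalIntegrable

lemma green_aux {a b k ε : ℝ} {f f' f'' y y' y'' : ℝ → ℝ} {c d : ℝ}
    (hc : a ≤ c) (hcd : c ≤ d) (hd : d ≤ b)
    (hf : ∀ t ∈ Icc a b, HasDerivWithinAt f (f' t) (Icc a b) t)
    (hf' : ∀ t ∈ Icc a b, HasDerivWithinAt f' (f'' t) (Icc a b) t)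
    (hcf'' : ContinuousOn f'' (Icc a b))
    (hy1 : ∀ t ∈ Icc a b, HasDerivWithinAt y (y' t) (Icc a b) t)
    (hy2 : ∀ t ∈ Icc a b, HasDerivWithinAt y' (y'' t) (Icc a b) t)
    (hzode : ∀ t ∈ Icc a b, y'' t - f'' t / k = -(f'' t) / k - (k / ε) * (y t - f t / k))
    (ψ ψ' : ℝ → ℝ)
    (hψ : ∀ s, HasDerivAt ψ (ψ' s) s)
    (hψ' : ∀ s, HasDerivAt ψ' (-(k / ε) * ψ s) s) :
    ∫ s in c..d, -(1 / k) * (f'' s * ψ s)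
      = ((y' d - f' d / k) * ψ d - (y d - f d / k) * ψ' d)
        - ((y' c - f' c / k) * ψ c - (y c - f c / k) * ψ' c) := by
  have hψc : Continuous ψ := continuous_iff_continuousAt.2 fun s => (hψ s).continuousAt
  apply ftc_aux_s11 hc hcd hd
    (u := fun s => (y' s - f' s / k) * ψ s - (y s - f s / k) * ψ' s)
  · intro t ht
    have h1 := ((hy2 t ht).sub ((hf' t ht).div_const k)).mul ((hψ t).hasDerivWithinAt)
    have h2 := ((hy1 t ht).sub ((hf t ht).div_const k)).mul ((hψ' t).hasDerivWithinAt)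
    have h3 := h1.sub h2
    refine h3.congr_deriv ?_
    rw [hzode t ht]
    simp only [Pi.sub_apply]
    ring
  · exact continuousOn_const.mul (hcf''.mul hψc.continuousOn)


set_option maxHeartbeats 1000000 in
/-- a priori estimate: for `ε ∈ Jₙ`, a three times continuously
differentiable `f` on `[a,b]` with `μ₁ = sup |f''|`, `μ₂ = sup |f'''|`, and `y_ε` the
solution of the Neumann problem, for every `t₀ ∈ [a,b]`:
`|y_ε(t₀) - f(t₀)/k|
   ≤ (1/(k sin λ)) √(ε/k) { |f'(a)| + |f'(b)| + √(ε/k)(|f''(a)| + μ₂ (b-a)) }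
     + (1/k) √(ε/k) { |f'(a)| + √(ε/k)(μ₁ + |f''(a)| + μ₂ (b-a)) }`. -/
theorem stmt_11 (a b k lam ε : ℝ) (n : ℕ) (f f' f'' f''' y y' y'' : ℝ → ℝ)
    (hab : a < b) (hk : 0 < k) (hlam : 0 < lam) (hlam' : lam ≤ π / 2)
    (hε : ε ∈ Icc (k * ((b - a) / ((n + 1) * π - lam)) ^ 2)
      (k * ((b - a) / (n * π + lam)) ^ 2))
    (hf : ∀ t ∈ Icc a b, HasDerivWithinAt f (f' t) (Icc a b) t)
    (hf' : ∀ t ∈ Icc a b, HasDerivWithinAt f' (f'' t) (Icc a b) t)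
    (hf'' : ∀ t ∈ Icc a b, HasDerivWithinAt f'' (f''' t) (Icc a b) t)
    (hf''' : ContinuousOn f''' (Icc a b))
    (hy : IsNeumannSolution a b k ε f y y' y'') :
    ∀ t₀ ∈ Icc a b,
      |y t₀ - f t₀ / k| ≤
        (1 / (k * Real.sin lam)) * Real.sqrt (ε / k) *
            (|f' a| + |f' b| +
              Real.sqrt (ε / k) *
                (|f'' a| + sSup ((fun t => |f''' t|) '' Icc a b) * (b - a))) +
          (1 / k) * Real.sqrt (ε / k) *
            (|f' a| +
              Real.sqrt (ε / k) *
                (sSup ((fun t => |f'' t|) '' Icc a b) + |f'' a| +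
                  sSup ((fun t => |f''' t|) '' Icc a b) * (b - a))) := by
  obtain ⟨hy1, hy2, hy3, hy4, hy5, hy6⟩ := hy
  obtain ⟨hε1, hε2⟩ := hε
  intro t₀ ht₀
  set μ₁ := sSup ((fun t => |f'' t|) '' Icc a b) with hμ₁def
  set μ₂ := sSup ((fun t => |f''' t|) '' Icc a b) with hμ₂def
  set L := b - a with hLdef
  have hLpos : 0 < L := sub_pos.2 hab
  have hπ := Real.pi_pos
  have hnπ : (0:ℝ) ≤ (n:ℝ) * π := by positivity
  have hpl1 : 0 < (n:ℝ) * π + lam := by linarith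
  have hpl2 : 0 < ((n:ℝ) + 1) * π - lam := by nlinarith
  have hεpos : 0 < ε := lt_of_lt_of_le (by positivity) hε1
  set ω := Real.sqrt (k / ε) with hωdef
  have hωpos : 0 < ω := Real.sqrt_pos.2 (by positivity)
  have hωsq : ω ^ 2 = k / ε := Real.sq_sqrt (by positivity)
  have hq : Real.sqrt (ε / k) = 1 / ω := by
    rw [show ε / k = (k / ε)⁻¹ by rw [inv_div], Real.sqrt_inv, one_div]
  have hωL1 : (n:ℝ) * π + lam ≤ ω * L := by
    have h1 : (((n:ℝ) * π + lam) / L) ^ 2 ≤ k / ε := by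
      rw [div_pow, div_le_div_iff₀ (by positivity) hεpos]
      rw [div_pow, ← mul_div_assoc, le_div_iff₀ (by positivity)] at hε2
      nlinarith
    have h2 : ((n:ℝ) * π + lam) / L ≤ ω := by
      rw [hωdef]
      calc ((n:ℝ) * π + lam) / L = Real.sqrt ((((n:ℝ) * π + lam) / L) ^ 2) :=
            (Real.sqrt_sq (by positivity)).symm
        _ ≤ Real.sqrt (k / ε) := Real.sqrt_le_sqrt h1
    calc (n:ℝ) * π + lam = (((n:ℝ) * π + lam) / L) * L := by field_simp
      _ ≤ ω * L := by apply mul_le_mul_of_nonneg_right h2 hLpos.le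
  have hωL2 : ω * L ≤ ((n:ℝ) + 1) * π - lam := by
    have h1 : k / ε ≤ ((((n:ℝ) + 1) * π - lam) / L) ^ 2 := by
      rw [div_pow, div_le_div_iff₀ hεpos (by positivity)]
      rw [div_pow, ← mul_div_assoc, div_le_iff₀ (by positivity)] at hε1
      nlinarith
    have h2 : ω ≤ (((n:ℝ) + 1) * π - lam) / L := by
      rw [hωdef]
      calc Real.sqrt (k / ε) ≤ Real.sqrt (((((n:ℝ) + 1) * π - lam) / L) ^ 2) :=
            Real.sqrt_le_sqrt h1
        _ = (((n:ℝ) + 1) * π - lam) / L := Real.sqrt_sq (by positivity)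
    calc ω * L ≤ ((((n:ℝ) + 1) * π - lam) / L) * L :=
          mul_le_mul_of_nonneg_right h2 hLpos.le
      _ = ((n:ℝ) + 1) * π - lam := by field_simp
  have hsinlam : 0 < Real.sin lam := Real.sin_pos_of_pos_of_lt_pi hlam (by linarith)
  have hsinωL : Real.sin lam ≤ |Real.sin (ω * L)| := by
    set r := ω * L - n * π with hrdef
    have hr1 : lam ≤ r := by simp only [hrdef]; linarith
    have hr2 : r ≤ π - lam := by
      have : ((n:ℝ) + 1) * π = n * π + π := by ring
      simp only [hrdef]; linarith
    have hsr : Real.sin (ω * L) = (-1) ^ n * Real.sin r := by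
      rw [show ω * L = r + n * π by ring, Real.sin_add_nat_mul_pi]
    have habs : |Real.sin (ω * L)| = Real.sin r := by
      rw [hsr, abs_mul, abs_pow, abs_neg, abs_one, one_pow, one_mul,
        abs_of_nonneg (Real.sin_nonneg_of_nonneg_of_le_pi (by linarith) (by linarith))]
    rw [habs]
    rcases le_or_gt r (π / 2) with h | h
    · exact Real.sin_le_sin_of_le_of_le_pi_div_two (by linarith) h hr1
    · rw [← Real.sin_pi_sub r]
      exact Real.sin_le_sin_of_le_of_le_pi_div_two (by linarith) (by linarith) (by linarith)
  -- continuity and sup facts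
  have hcf'' : ContinuousOn f'' (Icc a b) := fun t ht => (hf'' t ht).continuousWithinAt
  have hmema : a ∈ Icc a b := ⟨le_refl a, hab.le⟩
  have hmemb : b ∈ Icc a b := ⟨hab.le, le_refl b⟩
  have hμ1 : ∀ s ∈ Icc a b, |f'' s| ≤ μ₁ := fun s hs =>
    le_csSup (isCompact_Icc.bddAbove_image hcf''.abs) (mem_image_of_mem _ hs)
  have hμ2 : ∀ s ∈ Icc a b, |f''' s| ≤ μ₂ := fun s hs =>
    le_csSup (isCompact_Icc.bddAbove_image hf'''.abs) (mem_image_of_mem _ hs)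
  have hμ2nn : 0 ≤ μ₂ := (abs_nonneg _).trans (hμ2 a hmema)
  have hμ1nn : 0 ≤ μ₁ := (abs_nonneg _).trans (hμ1 a hmema)
  -- the reduced ODE
  have hzode : ∀ t ∈ Icc a b,
      y'' t - f'' t / k = -(f'' t) / k - (k / ε) * (y t - f t / k) := by
    intro t ht
    have h := hy4 t ht
    field_simp
    linear_combination k * h
  -- trig test functions
  have hinner : ∀ (c s : ℝ), HasDerivAt (fun x => ω * c - ω * x) (-ω) s := by
    intro c s
    simpa using ((hasDerivAt_id s).const_mul ω).const_sub (ω * c)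
  have hφ1 : ∀ s, HasDerivAt (fun x => Real.sin (ω * t₀ - ω * x))
      ((fun x => -ω * Real.cos (ω * t₀ - ω * x)) s) s := by
    intro s
    have h := (Real.hasDerivAt_sin (ω * t₀ - ω * s)).comp s (hinner t₀ s)
    simp only [Function.comp_def] at h
    refine h.congr_deriv ?_; ring
  have hφ1' : ∀ s, HasDerivAt (fun x => -ω * Real.cos (ω * t₀ - ω * x))
      (-(k / ε) * (fun x => Real.sin (ω * t₀ - ω * x)) s) s := by
    intro s
    have h := ((Real.hasDerivAt_cos (ω * t₀ - ω * s)).comp s (hinner t₀ s)).const_mul (-ω)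
    simp only [Function.comp_def] at h
    refine h.congr_deriv ?_
    rw [← hωsq]; ring
  have hF1 : ∀ s, HasDerivAt (fun x => (1 / ω) * Real.cos (ω * t₀ - ω * x))
      (Real.sin (ω * t₀ - ω * s)) s := by
    intro s
    have h := ((Real.hasDerivAt_cos (ω * t₀ - ω * s)).comp s (hinner t₀ s)).const_mul (1 / ω)
    simp only [Function.comp_def] at h
    refine h.congr_deriv ?_
    field_simp
  have hφ2 : ∀ s, HasDerivAt (fun x => Real.cos (ω * b - ω * x))
      ((fun x => ω * Real.sin (ω * b - ω * x)) s) s := by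
    intro s
    have h := (Real.hasDerivAt_cos (ω * b - ω * s)).comp s (hinner b s)
    simp only [Function.comp_def] at h
    refine h.congr_deriv ?_; ring
  have hφ2' : ∀ s, HasDerivAt (fun x => ω * Real.sin (ω * b - ω * x))
      (-(k / ε) * (fun x => Real.cos (ω * b - ω * x)) s) s := by
    intro s
    have h := ((Real.hasDerivAt_sin (ω * b - ω * s)).comp s (hinner b s)).const_mul ω
    simp only [Function.comp_def] at h
    refine h.congr_deriv ?_
    rw [← hωsq]; ring
  have hF2 : ∀ s, HasDerivAt (fun x => -(1 / ω) * Real.sin (ω * b - ω * x))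
      (Real.cos (ω * b - ω * s)) s := by
    intro s
    have h := ((Real.hasDerivAt_sin (ω * b - ω * s)).comp s (hinner b s)).const_mul (-(1 / ω))
    simp only [Function.comp_def] at h
    refine h.congr_deriv ?_
    field_simp
  -- Green identities
  have E1 := green_aux (le_refl a) ht₀.1 ht₀.2 hf hf' hcf'' hy1 hy2 hzode
    (fun x => Real.sin (ω * t₀ - ω * x)) (fun x => -ω * Real.cos (ω * t₀ - ω * x)) hφ1 hφ1'
  have E2 := green_aux (le_refl a) hab.le (le_refl b) hf hf' hcf'' hy1 hy2 hzode
    (fun x => Real.cos (ω * b - ω * x)) (fun x => ω * Real.sin (ω * b - ω * x)) hφ2 hφ2'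
  simp only [sub_self, Real.sin_zero, Real.cos_zero, mul_zero, mul_one, zero_sub,
    hy5, hy6] at E1 E2
  have key1 : (y t₀ - f t₀ / k) * ω =
      (∫ s in a..t₀, -(1 / k) * (f'' s * Real.sin (ω * t₀ - ω * s)))
        + (-(f' a) / k) * Real.sin (ω * t₀ - ω * a)
        + (y a - f a / k) * (ω * Real.cos (ω * t₀ - ω * a)) := by
    linear_combination -E1
  have key2 : (y a - f a / k) * (ω * Real.sin (ω * b - ω * a)) =
      (∫ s in a..b, -(1 / k) * (f'' s * Real.cos (ω * b - ω * s)))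
        + f' b / k - f' a / k * Real.cos (ω * b - ω * a) := by
    linear_combination -E2
  -- integration by parts bounds
  have habs_sin : ∀ x : ℝ, |Real.sin x| ≤ 1 :=
    fun x => abs_le.2 ⟨Real.neg_one_le_sin x, Real.sin_le_one x⟩
  have habs_cos : ∀ x : ℝ, |Real.cos x| ≤ 1 :=
    fun x => abs_le.2 ⟨Real.neg_one_le_cos x, Real.cos_le_one x⟩
  have hinvω : (0:ℝ) < 1 / ω := by positivity
  have huIcc : uIcc a b = Icc a b := uIcc_of_le hab.le
  have huIcc1 : uIcc a t₀ = Icc a t₀ := uIcc_of_le ht₀.1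
  have hsubt : Icc a t₀ ⊆ Icc a b := Icc_subset_Icc (le_refl a) ht₀.2
  have hcont2a : ContinuousOn
      (fun s => f''' s * (-(1 / ω) * Real.sin (ω * b - ω * s))) (Icc a b) :=
    hf'''.mul (Continuous.continuousOn (by fun_prop))
  have hcont2b : ContinuousOn (fun s => f'' s * Real.cos (ω * b - ω * s)) (Icc a b) :=
    hcf''.mul (Continuous.continuousOn (by fun_prop))
  have hcont1a : ContinuousOn
      (fun s => f''' s * ((1 / ω) * Real.cos (ω * t₀ - ω * s))) (Icc a b) :=
    hf'''.mul (Continuous.continuousOn (by fun_prop))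
  have hcont1b : ContinuousOn (fun s => f'' s * Real.sin (ω * t₀ - ω * s)) (Icc a b) :=
    hcf''.mul (Continuous.continuousOn (by fun_prop))
  have hInt2a : IntervalIntegrable
      (fun s => f''' s * (-(1 / ω) * Real.sin (ω * b - ω * s))) MeasureTheory.volume a b :=
    (show ContinuousOn _ (uIcc a b) by rw [huIcc]; exact hcont2a).intervalIntegrable
  have hInt2b : IntervalIntegrable
      (fun s => f'' s * Real.cos (ω * b - ω * s)) MeasureTheory.volume a b :=
    (show ContinuousOn _ (uIcc a b) by rw [huIcc]; exact hcont2b).intervalIntegrable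
  have hInt1a : IntervalIntegrable
      (fun s => f''' s * ((1 / ω) * Real.cos (ω * t₀ - ω * s))) MeasureTheory.volume a t₀ :=
    (show ContinuousOn _ (uIcc a t₀) by
      rw [huIcc1]; exact hcont1a.mono hsubt).intervalIntegrable
  have hInt1b : IntervalIntegrable
      (fun s => f'' s * Real.sin (ω * t₀ - ω * s)) MeasureTheory.volume a t₀ :=
    (show ContinuousOn _ (uIcc a t₀) by
      rw [huIcc1]; exact hcont1b.mono hsubt).intervalIntegrable
  have ibp2 : ∫ s in a..b, (f''' s * (-(1 / ω) * Real.sin (ω * b - ω * s))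
        + f'' s * Real.cos (ω * b - ω * s))
      = f'' b * (-(1 / ω) * Real.sin (ω * b - ω * b))
        - f'' a * (-(1 / ω) * Real.sin (ω * b - ω * a)) := by
    apply ftc_aux_s11 (le_refl a) hab.le (le_refl b)
      (u := fun s => f'' s * (-(1 / ω) * Real.sin (ω * b - ω * s)))
    · intro t ht
      exact (hf'' t ht).mul (hF2 t).hasDerivWithinAt
    · exact hcont2a.add hcont2b
  have ibp1 : ∫ s in a..t₀, (f''' s * ((1 / ω) * Real.cos (ω * t₀ - ω * s))
        + f'' s * Real.sin (ω * t₀ - ω * s))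
      = f'' t₀ * ((1 / ω) * Real.cos (ω * t₀ - ω * t₀))
        - f'' a * ((1 / ω) * Real.cos (ω * t₀ - ω * a)) := by
    apply ftc_aux_s11 (le_refl a) ht₀.1 ht₀.2
      (u := fun s => f'' s * ((1 / ω) * Real.cos (ω * t₀ - ω * s)))
    · intro t ht
      exact (hf'' t ht).mul (hF1 t).hasDerivWithinAt
    · exact hcont1a.add hcont1b
  have split2 : ∫ s in a..b, f'' s * Real.cos (ω * b - ω * s)
      = f'' a * ((1 / ω) * Real.sin (ω * b - ω * a))
        - ∫ s in a..b, f''' s * (-(1 / ω) * Real.sin (ω * b - ω * s)) := by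
    rw [intervalIntegral.integral_add hInt2a hInt2b] at ibp2
    simp only [sub_self, Real.sin_zero, mul_zero, zero_sub] at ibp2
    linear_combination ibp2
  have split1 : ∫ s in a..t₀, f'' s * Real.sin (ω * t₀ - ω * s)
      = f'' t₀ * ((1 / ω) * Real.cos (ω * t₀ - ω * t₀))
        - f'' a * ((1 / ω) * Real.cos (ω * t₀ - ω * a))
        - ∫ s in a..t₀, f''' s * ((1 / ω) * Real.cos (ω * t₀ - ω * s)) := by
    rw [intervalIntegral.integral_add hInt1a hInt1b] at ibp1
    linear_combination ibp1
  have hIF2 : |∫ s in a..b, f''' s * (-(1 / ω) * Real.sin (ω * b - ω * s))|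
      ≤ μ₂ * (1 / ω) * L := by
    have h := intervalIntegral.norm_integral_le_of_norm_le_const
      (C := μ₂ * (1 / ω)) (a := a) (b := b)
      (f := fun s => f''' s * (-(1 / ω) * Real.sin (ω * b - ω * s))) ?_
    · rw [Real.norm_eq_abs] at h
      have hba : |b - a| = L := by rw [← hLdef, abs_of_pos hLpos]
      rw [hba] at h
      exact h
    · intro x hx
      rw [uIoc_of_le hab.le] at hx
      have hx' : x ∈ Icc a b := Ioc_subset_Icc_self hx
      rw [Real.norm_eq_abs, abs_mul]
      refine mul_le_mul (hμ2 x hx') ?_ (abs_nonneg _) hμ2nn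
      rw [abs_mul, abs_neg, abs_of_pos hinvω]
      calc (1 / ω) * |Real.sin (ω * b - ω * x)| ≤ (1 / ω) * 1 :=
            mul_le_mul_of_nonneg_left (habs_sin _) hinvω.le
        _ = 1 / ω := mul_one _
  have hIF1 : |∫ s in a..t₀, f''' s * ((1 / ω) * Real.cos (ω * t₀ - ω * s))|
      ≤ μ₂ * (1 / ω) * L := by
    have h := intervalIntegral.norm_integral_le_of_norm_le_const
      (C := μ₂ * (1 / ω)) (a := a) (b := t₀)
      (f := fun s => f''' s * ((1 / ω) * Real.cos (ω * t₀ - ω * s))) ?_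
    · rw [Real.norm_eq_abs] at h
      refine h.trans ?_
      have hta : |t₀ - a| ≤ L := by
        rw [abs_of_nonneg (by linarith [ht₀.1])]
        simp only [hLdef]
        linarith [ht₀.2]
      exact mul_le_mul_of_nonneg_left hta (by positivity)
    · intro x hx
      rw [uIoc_of_le ht₀.1] at hx
      have hx' : x ∈ Icc a b := hsubt (Ioc_subset_Icc_self hx)
      rw [Real.norm_eq_abs, abs_mul]
      refine mul_le_mul (hμ2 x hx') ?_ (abs_nonneg _) hμ2nn
      rw [abs_mul, abs_of_pos hinvω]
      calc (1 / ω) * |Real.cos (ω * t₀ - ω * x)| ≤ (1 / ω) * 1 :=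
            mul_le_mul_of_nonneg_left (habs_cos _) hinvω.le
        _ = 1 / ω := mul_one _
  have hb2 : |∫ s in a..b, f'' s * Real.cos (ω * b - ω * s)|
      ≤ |f'' a| * (1 / ω) + μ₂ * (1 / ω) * L := by
    rw [split2]
    refine (abs_sub _ _).trans (add_le_add ?_ hIF2)
    rw [abs_mul]
    refine (mul_le_mul_of_nonneg_left ?_ (abs_nonneg (f'' a)))
    rw [abs_mul, abs_of_pos hinvω]
    calc (1 / ω) * |Real.sin (ω * b - ω * a)| ≤ (1 / ω) * 1 :=
          mul_le_mul_of_nonneg_left (habs_sin _) hinvω.le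
      _ = 1 / ω := mul_one _
  have hb1 : |∫ s in a..t₀, f'' s * Real.sin (ω * t₀ - ω * s)|
      ≤ μ₁ * (1 / ω) + |f'' a| * (1 / ω) + μ₂ * (1 / ω) * L := by
    rw [split1]
    refine ((abs_sub _ _).trans (add_le_add (abs_sub _ _) hIF1)).trans ?_
    have e1 : |f'' t₀ * ((1 / ω) * Real.cos (ω * t₀ - ω * t₀))| ≤ μ₁ * (1 / ω) := by
      rw [abs_mul]
      refine mul_le_mul (hμ1 t₀ ht₀) ?_ (abs_nonneg _) hμ1nn
      rw [abs_mul, abs_of_pos hinvω]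
      calc (1 / ω) * |Real.cos (ω * t₀ - ω * t₀)| ≤ (1 / ω) * 1 :=
            mul_le_mul_of_nonneg_left (habs_cos _) hinvω.le
        _ = 1 / ω := mul_one _
    have e2 : |f'' a * ((1 / ω) * Real.cos (ω * t₀ - ω * a))| ≤ |f'' a| * (1 / ω) := by
      rw [abs_mul]
      refine mul_le_mul_of_nonneg_left ?_ (abs_nonneg _)
      rw [abs_mul, abs_of_pos hinvω]
      calc (1 / ω) * |Real.cos (ω * t₀ - ω * a)| ≤ (1 / ω) * 1 :=
            mul_le_mul_of_nonneg_left (habs_cos _) hinvω.le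
        _ = 1 / ω := mul_one _
    linarith
  -- bound |y a - f a / k|
  have hsL : Real.sin lam ≤ |Real.sin (ω * b - ω * a)| := by
    rw [show ω * b - ω * a = ω * L by rw [hLdef]; ring]
    exact hsinωL
  have hωS : 0 < ω * Real.sin lam := by positivity
  have hinvk : (0:ℝ) < 1 / k := by positivity
  have h2abs : |y a - f a / k| * (ω * Real.sin lam)
      ≤ (1 / k) * (|f'' a| * (1 / ω) + μ₂ * (1 / ω) * L) + |f' b| / k + |f' a| / k := by
    have c1 : |y a - f a / k| * (ω * Real.sin lam)
        ≤ |(y a - f a / k) * (ω * Real.sin (ω * b - ω * a))| := by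
      rw [abs_mul, abs_mul, abs_of_pos hωpos]
      exact mul_le_mul_of_nonneg_left (mul_le_mul_of_nonneg_left hsL hωpos.le)
        (abs_nonneg _)
    refine c1.trans ?_
    rw [key2]
    refine ((abs_sub _ _).trans (add_le_add (abs_add_le _ _) le_rfl)).trans ?_
    have d1 : |∫ s in a..b, -(1 / k) * (f'' s * Real.cos (ω * b - ω * s))|
        ≤ (1 / k) * (|f'' a| * (1 / ω) + μ₂ * (1 / ω) * L) := by
      rw [intervalIntegral.integral_const_mul, abs_mul, abs_neg, abs_of_pos hinvk]
      exact mul_le_mul_of_nonneg_left hb2 hinvk.le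
    have d2 : |f' b / k| = |f' b| / k := by rw [abs_div, abs_of_pos hk]
    have d3 : |f' a / k * Real.cos (ω * b - ω * a)| ≤ |f' a| / k := by
      rw [abs_mul, abs_div, abs_of_pos hk]
      calc |f' a| / k * |Real.cos (ω * b - ω * a)| ≤ |f' a| / k * 1 :=
            mul_le_mul_of_nonneg_left (habs_cos _) (by positivity)
        _ = |f' a| / k := mul_one _
    linarith
  have hZa : |y a - f a / k|
      ≤ 1 / (k * Real.sin lam) * (1 / ω)
          * (|f' a| + |f' b| + (1 / ω) * (|f'' a| + μ₂ * L)) := by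
    refine le_of_mul_le_mul_right (h2abs.trans (le_of_eq ?_)) hωS
    field_simp
    ring
  have h1abs : |y t₀ - f t₀ / k| * ω
      ≤ (1 / k) * (μ₁ * (1 / ω) + |f'' a| * (1 / ω) + μ₂ * (1 / ω) * L) + |f' a| / k
        + (1 / (k * Real.sin lam) * (1 / ω)
            * (|f' a| + |f' b| + (1 / ω) * (|f'' a| + μ₂ * L))) * ω := by
    have c0 : |y t₀ - f t₀ / k| * ω = |(y t₀ - f t₀ / k) * ω| := by
      rw [abs_mul, abs_of_pos hωpos]
    rw [c0, key1]
    refine (abs_add_three _ _ _).trans ?_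
    have d1 : |∫ s in a..t₀, -(1 / k) * (f'' s * Real.sin (ω * t₀ - ω * s))|
        ≤ (1 / k) * (μ₁ * (1 / ω) + |f'' a| * (1 / ω) + μ₂ * (1 / ω) * L) := by
      rw [intervalIntegral.integral_const_mul, abs_mul, abs_neg, abs_of_pos hinvk]
      exact mul_le_mul_of_nonneg_left hb1 hinvk.le
    have d2 : |-f' a / k * Real.sin (ω * t₀ - ω * a)| ≤ |f' a| / k := by
      rw [abs_mul, abs_div, abs_neg, abs_of_pos hk]
      calc |f' a| / k * |Real.sin (ω * t₀ - ω * a)| ≤ |f' a| / k * 1 :=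
            mul_le_mul_of_nonneg_left (habs_sin _) (by positivity)
        _ = |f' a| / k := mul_one _
    have d3 : |(y a - f a / k) * (ω * Real.cos (ω * t₀ - ω * a))|
        ≤ |y a - f a / k| * ω := by
      rw [abs_mul, abs_mul, abs_of_pos hωpos]
      refine mul_le_mul_of_nonneg_left ?_ (abs_nonneg _)
      calc ω * |Real.cos (ω * t₀ - ω * a)| ≤ ω * 1 :=
            mul_le_mul_of_nonneg_left (habs_cos _) hωpos.le
        _ = ω := mul_one _
    have d4 := mul_le_mul_of_nonneg_right hZa hωpos.le
    linarith
  rw [hq]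
  refine le_of_mul_le_mul_right (h1abs.trans (le_of_eq ?_)) hωpos
  field_simp
  ring
end

section
/- (Improved rate under compatible boundary data) Let $a<b$, $k>0$, $0<\lambda\le\pi/2$, $n\in\mathbb{N}$, $\epsilon\in J_n=[\,k((b-a)/((n+1)\pi-\lambda))^2,\; k((b-a)/(n\pi+\lambda))^2\,]$, let $f:[a,b]\to\mathbb{R}$ be three times continuously differentiable with $f'(a)=0$ and $f'(b)=0$, and set $\mu_1=\sup_{t\in[a,b]}|f''(t)|$, $\mu_2=\sup_{t\in[a,b]}|f'''(t)|$. Then the unique solution $y_\epsilon$ of the Neumann problem $\epsilon y''+ky=f(t)$, $y'(a)=y'(b)=0$ satisfies for all $t\in[a,b]$: $\left|y_\epsilon(t)-\frac{f(t)}{k}\right|\le\frac{\epsilon}{k^2}\left[\frac{1}{\sin\lambda}\big(|f''(a)|+\mu_2(b-a)\big)+\big(\mu_1+|f''(a)|+\mu_2(b-a)\big)\right]$; in particular the convergence to the reduced solution $u=f/k$ is of order $\mathcal{O}(\epsilon)$. -/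
open Real Set

lemma myFTC {a b : ℝ} {g g' : ℝ → ℝ}
    (hg : ∀ x ∈ Icc a b, HasDerivWithinAt g (g' x) (Icc a b) x)
    (hg' : ContinuousOn g' (Icc a b)) {t : ℝ} (ht : t ∈ Icc a b) :
    ∫ s in a..t, g' s = g t - g a := by
  apply intervalIntegral.integral_eq_sub_of_hasDeriv_right_of_le ht.1
  · exact fun x hx => ((hg x ⟨hx.1, hx.2.trans ht.2⟩).continuousWithinAt).mono
      (Icc_subset_Icc le_rfl ht.2)
  · intro x hx
    exact ((hg x ⟨hx.1.le, hx.2.le.trans ht.2⟩).hasDerivAt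
      (Icc_mem_nhds hx.1 (hx.2.trans_le ht.2))).hasDerivWithinAt
  · exact (hg'.mono (Icc_subset_Icc le_rfl ht.2)).intervalIntegrable_of_Icc ht.1

lemma mySinGe {lam x : ℝ} (h0 : 0 < lam) (h2 : lam ≤ π / 2) (hx : x ∈ Icc lam (π - lam)) :
    Real.sin lam ≤ Real.sin x := by
  have hπ := Real.pi_pos
  rcases le_or_gt x (π / 2) with h | h
  · exact Real.sin_le_sin_of_le_of_le_pi_div_two (by linarith) h hx.1
  · rw [← Real.sin_pi_sub x]
    exact Real.sin_le_sin_of_le_of_le_pi_div_two (by linarith) (by linarith)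
      (by linarith [hx.2])

lemma myAbsSinGe {lam Θ : ℝ} (n : ℕ) (h0 : 0 < lam) (h2 : lam ≤ π / 2)
    (hl : n * π + lam ≤ Θ) (hr : Θ ≤ (n + 1) * π - lam) :
    Real.sin lam ≤ |Real.sin Θ| := by
  have hx : Θ - n * π ∈ Icc lam (π - lam) := ⟨by linarith, by linarith⟩
  have hΘ : Real.sin Θ = (-1) ^ n * Real.sin (Θ - n * π) := by
    rw [← Real.sin_add_nat_mul_pi (Θ - n * π) n]; ring_nf
  rw [hΘ, abs_mul, abs_pow, abs_neg, abs_one, one_pow, one_mul]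
  exact (mySinGe h0 h2 hx).trans (le_abs_self _)

/-- improved rate under compatible boundary data: for `ε ∈ Jₙ` and a
three times continuously differentiable `f` with `f'(a) = f'(b) = 0`, the solution
`y_ε` of the Neumann problem satisfies, for all `t ∈ [a,b]`,
`|y_ε(t) - f(t)/k| ≤ (ε/k²) [ (1/sin λ)(|f''(a)| + μ₂(b-a)) + (μ₁ + |f''(a)| + μ₂(b-a)) ]`,
where `μ₁ = sup |f''|`, `μ₂ = sup |f'''|`; in particular the convergence to the reduced
solution `u = f/k` is of order `O(ε)`. -/
theorem stmt_13 (a b k lam ε : ℝ) (n : ℕ) (f f' f'' f''' y y' y'' : ℝ → ℝ)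
    (hab : a < b) (hk : 0 < k) (hlam : 0 < lam) (hlam' : lam ≤ π / 2)
    (hε : ε ∈ Icc (k * ((b - a) / ((n + 1) * π - lam)) ^ 2)
      (k * ((b - a) / (n * π + lam)) ^ 2))
    (hf : ∀ t ∈ Icc a b, HasDerivWithinAt f (f' t) (Icc a b) t)
    (hf' : ∀ t ∈ Icc a b, HasDerivWithinAt f' (f'' t) (Icc a b) t)
    (hf'' : ∀ t ∈ Icc a b, HasDerivWithinAt f'' (f''' t) (Icc a b) t)
    (hf''' : ContinuousOn f''' (Icc a b))
    (hfa : f' a = 0) (hfb : f' b = 0)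
    (hy : IsNeumannSolution a b k ε f y y' y'') :
    ∀ t ∈ Icc a b,
      |y t - f t / k| ≤
        ε / k ^ 2 *
          ((1 / Real.sin lam) *
              (|f'' a| + sSup ((fun t => |f''' t|) '' Icc a b) * (b - a)) +
            (sSup ((fun t => |f'' t|) '' Icc a b) + |f'' a| +
              sSup ((fun t => |f''' t|) '' Icc a b) * (b - a))) := by
  obtain ⟨hy1, hy2, hy3, hy4, hya0, hyb0⟩ := hy
  have hπ := Real.pi_pos
  have hk0 : k ≠ 0 := hk.ne'
  have hc : 0 < b - a := sub_pos.2 hab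
  have hnn : (0:ℝ) ≤ (n:ℝ) := Nat.cast_nonneg n
  have hB : 0 < (n + 1) * π - lam := by nlinarith
  have hA : 0 < n * π + lam := by nlinarith
  have hεpos : 0 < ε := by
    have hq : 0 < (b - a) / ((n + 1) * π - lam) := div_pos hc hB
    exact lt_of_lt_of_le (mul_pos hk (pow_pos hq 2)) hε.1
  have hε0 : ε ≠ 0 := hεpos.ne'
  set ω := Real.sqrt (k / ε) with hωdef
  have hkε : 0 < k / ε := div_pos hk hεpos
  have hω2 : ω ^ 2 = k / ε := Real.sq_sqrt hkε.le
  have hωpos : 0 < ω := Real.sqrt_pos.2 hkε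
  have hω0 : ω ≠ 0 := hωpos.ne'
  -- bounds on ω (b-a)
  have hΘu : ω * (b - a) ≤ (n + 1) * π - lam := by
    have h1 : k / ε ≤ (((n + 1) * π - lam) / (b - a)) ^ 2 := by
      rw [div_le_iff₀ hεpos]
      have h2 := hε.1
      have h3 : k = (k * ((b - a) / ((n + 1) * π - lam)) ^ 2) *
          (((n + 1) * π - lam) / (b - a)) ^ 2 := by
        field_simp
      rw [h3]
      exact (mul_le_mul_of_nonneg_right h2 (sq_nonneg _)).trans_eq (mul_comm _ _)
    have h4 : ω ≤ ((n + 1) * π - lam) / (b - a) := by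
      calc ω ≤ Real.sqrt ((((n + 1) * π - lam) / (b - a)) ^ 2) := Real.sqrt_le_sqrt h1
        _ = ((n + 1) * π - lam) / (b - a) := Real.sqrt_sq (by positivity)
    calc ω * (b - a) ≤ (((n + 1) * π - lam) / (b - a)) * (b - a) :=
          mul_le_mul_of_nonneg_right h4 hc.le
      _ = (n + 1) * π - lam := by field_simp
  have hΘl : n * π + lam ≤ ω * (b - a) := by
    have h1 : ((n * π + lam) / (b - a)) ^ 2 ≤ k / ε := by
      rw [le_div_iff₀ hεpos]
      have h2 := hε.2
      calc ((n * π + lam) / (b - a)) ^ 2 * ε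
          ≤ ((n * π + lam) / (b - a)) ^ 2 * (k * ((b - a) / (n * π + lam)) ^ 2) :=
            mul_le_mul_of_nonneg_left h2 (sq_nonneg _)
        _ = k := by field_simp
    have h3 : (n * π + lam) / (b - a) ≤ ω := by
      calc (n * π + lam) / (b - a)
          = Real.sqrt (((n * π + lam) / (b - a)) ^ 2) := (Real.sqrt_sq (by positivity)).symm
        _ ≤ ω := Real.sqrt_le_sqrt h1
    exact (div_le_iff₀ hc).1 h3
  have hsinlam : 0 < Real.sin lam := Real.sin_pos_of_pos_of_lt_pi hlam (by linarith)
  have hsinΘ : Real.sin lam ≤ |Real.sin (ω * (b - a))| := myAbsSinGe n hlam hlam' hΘl hΘu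
  -- the error function z and friends
  set z : ℝ → ℝ := fun t => y t - f t / k with hzdef
  set zd : ℝ → ℝ := fun t => y' t - f' t / k with hzddef
  set zdd : ℝ → ℝ := fun t => y'' t - f'' t / k with hzdddef
  set h : ℝ → ℝ := fun t => -(1 / k) * f'' t with hhdef
  set hd : ℝ → ℝ := fun t => -(1 / k) * f''' t with hhddef
  have hz : ∀ t ∈ Icc a b, HasDerivWithinAt z (zd t) (Icc a b) t :=
    fun t ht => (hy1 t ht).sub ((hf t ht).div_const k)
  have hzd : ∀ t ∈ Icc a b, HasDerivWithinAt zd (zdd t) (Icc a b) t :=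
    fun t ht => (hy2 t ht).sub ((hf' t ht).div_const k)
  have hh : ∀ t ∈ Icc a b, HasDerivWithinAt h (hd t) (Icc a b) t :=
    fun t ht => (hf'' t ht).const_mul _
  have hode : ∀ t ∈ Icc a b, zdd t + ω ^ 2 * z t = h t := by
    intro t ht
    have e := hy4 t ht
    simp only [hzdddef, hzdef, hhdef]
    rw [hω2]
    have hε' : ε⁻¹ * ε = 1 := inv_mul_cancel₀ hε0
    have hk' : k⁻¹ * k = 1 := inv_mul_cancel₀ hk0
    linear_combination ε⁻¹ * e - y'' t * hε' - ε⁻¹ * f t * hk'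
  have hch : ContinuousOn h (Icc a b) := fun t ht => (hh t ht).continuousWithinAt
  have hchd : ContinuousOn hd (Icc a b) := continuousOn_const.mul hf'''
  have hzda : zd a = 0 := by simp [hzddef, hya0, hfa]
  have hzdb : zd b = 0 := by simp [hzddef, hyb0, hfb]
  -- sup bounds
  have hcf'' : ContinuousOn f'' (Icc a b) := fun t ht => (hf'' t ht).continuousWithinAt
  have hbdd1 : BddAbove ((fun t => |f'' t|) '' Icc a b) :=
    (isCompact_Icc.image_of_continuousOn hcf''.abs).bddAbove
  have hbdd2 : BddAbove ((fun t => |f''' t|) '' Icc a b) :=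
    (isCompact_Icc.image_of_continuousOn hf'''.abs).bddAbove
  set μ₁ := sSup ((fun t => |f'' t|) '' Icc a b) with hμ1def
  set μ₂ := sSup ((fun t => |f''' t|) '' Icc a b) with hμ2def
  have hμ1 : ∀ t ∈ Icc a b, |f'' t| ≤ μ₁ := fun t ht => le_csSup hbdd1 ⟨t, ht, rfl⟩
  have hμ2 : ∀ t ∈ Icc a b, |f''' t| ≤ μ₂ := fun t ht => le_csSup hbdd2 ⟨t, ht, rfl⟩
  have haI : a ∈ Icc a b := ⟨le_rfl, hab.le⟩
  have hbI : b ∈ Icc a b := ⟨hab.le, le_rfl⟩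
  have hμ1nn : 0 ≤ μ₁ := (abs_nonneg _).trans (hμ1 a haI)
  have hμ2nn : 0 ≤ μ₂ := (abs_nonneg _).trans (hμ2 a haI)
  have habs_neg : |(-(1 / k))| = 1 / k := by
    rw [abs_neg, abs_of_pos (by positivity)]
  have habs_h : ∀ t ∈ Icc a b, |h t| ≤ (1 / k) * μ₁ := by
    intro t ht
    rw [hhdef]
    simp only
    rw [abs_mul, habs_neg]
    exact mul_le_mul_of_nonneg_left (hμ1 t ht) (by positivity)
  have habs_hd : ∀ t ∈ Icc a b, |hd t| ≤ (1 / k) * μ₂ := by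
    intro t ht
    rw [hhddef]
    simp only
    rw [abs_mul, habs_neg]
    exact mul_le_mul_of_nonneg_left (hμ2 t ht) (by positivity)
  have habs_ha : |h a| = (1 / k) * |f'' a| := by
    rw [hhdef]; simp only; rw [abs_mul, habs_neg]
  -- continuity of trig integrands
  have hccosa : ContinuousOn (fun s => h s * Real.cos (ω * (s - a))) (Icc a b) :=
    hch.mul (Real.continuous_cos.comp (continuous_const.mul (continuous_id.sub continuous_const))).continuousOn
  have hcsina : ContinuousOn (fun s => h s * Real.sin (ω * (s - a))) (Icc a b) :=
    hch.mul (Real.continuous_sin.comp (continuous_const.mul (continuous_id.sub continuous_const))).continuousOn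
  have hint1 : ∀ t ∈ Icc a b,
      IntervalIntegrable (fun s => h s * Real.cos (ω * (s - a))) MeasureTheory.volume a t :=
    fun t ht => (hccosa.mono (Icc_subset_Icc le_rfl ht.2)).intervalIntegrable_of_Icc ht.1
  have hint2 : ∀ t ∈ Icc a b,
      IntervalIntegrable (fun s => h s * Real.sin (ω * (s - a))) MeasureTheory.volume a t :=
    fun t ht => (hcsina.mono (Icc_subset_Icc le_rfl ht.2)).intervalIntegrable_of_Icc ht.1
  -- F1: first fundamental identity
  have hF1 : ∀ t ∈ Icc a b,
      zd t * Real.cos (ω * (t - a)) + ω * z t * Real.sin (ω * (t - a)) =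
        ∫ s in a..t, h s * Real.cos (ω * (s - a)) := by
    intro t ht
    have hP : ∀ s ∈ Icc a b, HasDerivWithinAt
        (fun s => zd s * Real.cos (ω * (s - a)) + ω * z s * Real.sin (ω * (s - a)))
        (h s * Real.cos (ω * (s - a))) (Icc a b) s := by
      intro s hs
      have harg : HasDerivWithinAt (fun s : ℝ => ω * (s - a)) ω (Icc a b) s := by
        simpa using ((hasDerivWithinAt_id s (Icc a b)).sub_const a).const_mul ω
      have key := ((hzd s hs).mul harg.cos).add (((hz s hs).const_mul ω).mul harg.sin)
      have e := hode s hs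
      have hval : h s * Real.cos (ω * (s - a)) =
          zdd s * Real.cos (ω * (s - a)) + zd s * (-Real.sin (ω * (s - a)) * ω) +
            (ω * zd s * Real.sin (ω * (s - a)) + ω * z s * (Real.cos (ω * (s - a)) * ω)) := by
        linear_combination (-Real.cos (ω * (s - a))) * e
      rw [hval]
      exact key
    have hft := myFTC hP hccosa ht
    simp only [sub_self, mul_zero, Real.cos_zero, Real.sin_zero, hzda, zero_mul,
      mul_one, add_zero, zero_add, sub_zero] at hft
    linarith [hft]
  -- F2: second fundamental identity
  have hF2 : ∀ t ∈ Icc a b,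
      zd t * Real.sin (ω * (t - a)) - ω * z t * Real.cos (ω * (t - a)) =
        -(ω * z a) + ∫ s in a..t, h s * Real.sin (ω * (s - a)) := by
    intro t ht
    have hQ : ∀ s ∈ Icc a b, HasDerivWithinAt
        (fun s => zd s * Real.sin (ω * (s - a)) - ω * z s * Real.cos (ω * (s - a)))
        (h s * Real.sin (ω * (s - a))) (Icc a b) s := by
      intro s hs
      have harg : HasDerivWithinAt (fun s : ℝ => ω * (s - a)) ω (Icc a b) s := by
        simpa using ((hasDerivWithinAt_id s (Icc a b)).sub_const a).const_mul ω
      have key := ((hzd s hs).mul harg.sin).sub (((hz s hs).const_mul ω).mul harg.cos)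
      have e := hode s hs
      have hval : h s * Real.sin (ω * (s - a)) =
          zdd s * Real.sin (ω * (s - a)) + zd s * (Real.cos (ω * (s - a)) * ω) -
            (ω * zd s * Real.cos (ω * (s - a)) + ω * z s * (-Real.sin (ω * (s - a)) * ω)) := by
        linear_combination (-Real.sin (ω * (s - a))) * e
      rw [hval]
      exact key
    have hft := myFTC hQ hcsina ht
    simp only [sub_self, mul_zero, Real.cos_zero, Real.sin_zero, hzda, zero_mul,
      mul_one, add_zero, zero_add, sub_zero, zero_sub, sub_neg_eq_add] at hft
    linarith [hft]
  -- decomposition of the kernel integrals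
  have hW : ∀ t ∈ Icc a b, (∫ s in a..t, h s * Real.sin (ω * (t - s))) =
      Real.sin (ω * (t - a)) * (∫ s in a..t, h s * Real.cos (ω * (s - a))) -
        Real.cos (ω * (t - a)) * (∫ s in a..t, h s * Real.sin (ω * (s - a))) := by
    intro t ht
    rw [← intervalIntegral.integral_const_mul, ← intervalIntegral.integral_const_mul,
      ← intervalIntegral.integral_sub ((hint1 t ht).const_mul _) ((hint2 t ht).const_mul _)]
    apply intervalIntegral.integral_congr
    intro s _
    show h s * Real.sin (ω * (t - s)) = _
    rw [show ω * (t - s) = ω * (t - a) - ω * (s - a) by ring, Real.sin_sub]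
    ring
  have hKdec : (∫ s in a..b, h s * Real.cos (ω * (b - s))) =
      Real.cos (ω * (b - a)) * (∫ s in a..b, h s * Real.cos (ω * (s - a))) +
        Real.sin (ω * (b - a)) * (∫ s in a..b, h s * Real.sin (ω * (s - a))) := by
    rw [← intervalIntegral.integral_const_mul, ← intervalIntegral.integral_const_mul,
      ← intervalIntegral.integral_add ((hint1 b hbI).const_mul _) ((hint2 b hbI).const_mul _)]
    apply intervalIntegral.integral_congr
    intro s _
    show h s * Real.cos (ω * (b - s)) = _
    rw [show ω * (b - s) = ω * (b - a) - ω * (s - a) by ring, Real.cos_sub]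
    ring
  -- boundary identity for z a
  have hzaEq : (ω * z a) * Real.sin (ω * (b - a)) =
      ∫ s in a..b, h s * Real.cos (ω * (b - s)) := by
    have e1 := hF1 b hbI
    have e2 := hF2 b hbI
    rw [hzdb] at e1 e2
    rw [hKdec]
    linear_combination Real.cos (ω * (b - a)) * e1 + Real.sin (ω * (b - a)) * e2
  -- representation formula
  have hrep : ∀ t ∈ Icc a b, ω * z t =
      (ω * z a) * Real.cos (ω * (t - a)) + ∫ s in a..t, h s * Real.sin (ω * (t - s)) := by
    intro t ht
    have e1 := hF1 t ht
    have e2 := hF2 t ht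
    have hp : Real.sin (ω * (t - a)) ^ 2 + Real.cos (ω * (t - a)) ^ 2 = 1 :=
      Real.sin_sq_add_cos_sq _
    rw [hW t ht]
    linear_combination Real.sin (ω * (t - a)) * e1 - Real.cos (ω * (t - a)) * e2 -
      (ω * z t) * hp
  -- integration by parts bound for the W-integral
  have hWbound : ∀ t ∈ Icc a b, |∫ s in a..t, h s * Real.sin (ω * (t - s))| ≤
      (1 / ω) * ((1 / k) * μ₁ + (1 / k) * |f'' a| + (1 / k) * μ₂ * (b - a)) := by
    intro t ht
    have hG : ∀ s ∈ Icc a b, HasDerivWithinAt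
        (fun s => (1 / ω) * (h s * Real.cos (ω * (t - s))))
        ((1 / ω) * (hd s * Real.cos (ω * (t - s))) + h s * Real.sin (ω * (t - s)))
        (Icc a b) s := by
      intro s hs
      have harg : HasDerivWithinAt (fun s : ℝ => ω * (t - s)) (-ω) (Icc a b) s := by
        simpa using ((hasDerivWithinAt_id s (Icc a b)).const_sub t).const_mul ω
      have key := ((hh s hs).mul harg.cos).const_mul (1 / ω)
      have hval : (1 / ω) * (hd s * Real.cos (ω * (t - s))) + h s * Real.sin (ω * (t - s)) =
          (1 / ω) * (hd s * Real.cos (ω * (t - s)) +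
            h s * (-Real.sin (ω * (t - s)) * -ω)) := by
        field_simp
      rw [hval]
      exact key
    have hcostc : Continuous fun s : ℝ => Real.cos (ω * (t - s)) :=
      Real.continuous_cos.comp (continuous_const.mul (continuous_const.sub continuous_id))
    have hsintc : Continuous fun s : ℝ => Real.sin (ω * (t - s)) :=
      Real.continuous_sin.comp (continuous_const.mul (continuous_const.sub continuous_id))
    have hcint1 : ContinuousOn (fun s => (1 / ω) * (hd s * Real.cos (ω * (t - s)))) (Icc a b) :=
      continuousOn_const.mul (hchd.mul hcostc.continuousOn)
    have hcint2 : ContinuousOn (fun s => h s * Real.sin (ω * (t - s))) (Icc a b) :=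
      hch.mul hsintc.continuousOn
    have hftc := myFTC hG (hcint1.add hcint2) ht
    rw [intervalIntegral.integral_add
      ((hcint1.mono (Icc_subset_Icc le_rfl ht.2)).intervalIntegrable_of_Icc ht.1)
      ((hcint2.mono (Icc_subset_Icc le_rfl ht.2)).intervalIntegrable_of_Icc ht.1)] at hftc
    simp only [sub_self, mul_zero, Real.cos_zero, mul_one] at hftc
    have hE : (∫ s in a..t, h s * Real.sin (ω * (t - s))) =
        (1 / ω) * h t - (1 / ω) * (h a * Real.cos (ω * (t - a))) -
          ∫ s in a..t, (1 / ω) * (hd s * Real.cos (ω * (t - s))) := by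
      linarith [hftc]
    have c1 : |(1 / ω) * h t| ≤ (1 / ω) * ((1 / k) * μ₁) := by
      rw [abs_mul, abs_of_pos (by positivity : (0:ℝ) < 1 / ω)]
      exact mul_le_mul_of_nonneg_left (habs_h t ht) (by positivity)
    have c2 : |(1 / ω) * (h a * Real.cos (ω * (t - a)))| ≤ (1 / ω) * ((1 / k) * |f'' a|) := by
      rw [abs_mul, abs_of_pos (by positivity : (0:ℝ) < 1 / ω), abs_mul, habs_ha]
      apply mul_le_mul_of_nonneg_left _ (by positivity)
      calc (1 / k) * |f'' a| * |Real.cos (ω * (t - a))| ≤ (1 / k) * |f'' a| * 1 :=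
            mul_le_mul_of_nonneg_left (Real.abs_cos_le_one _) (by positivity)
        _ = (1 / k) * |f'' a| := mul_one _
    have c3 : |∫ s in a..t, (1 / ω) * (hd s * Real.cos (ω * (t - s)))| ≤
        (1 / ω) * ((1 / k) * μ₂ * (b - a)) := by
      rw [intervalIntegral.integral_const_mul, abs_mul,
        abs_of_pos (by positivity : (0:ℝ) < 1 / ω)]
      apply mul_le_mul_of_nonneg_left _ (by positivity)
      have hb1 : ∀ x ∈ Set.uIoc a t, ‖hd x * Real.cos (ω * (t - x))‖ ≤ (1 / k) * μ₂ := by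
        intro x hx
        rw [Set.uIoc_of_le ht.1] at hx
        have hxI : x ∈ Icc a b := ⟨hx.1.le, hx.2.trans ht.2⟩
        calc ‖hd x * Real.cos (ω * (t - x))‖ = |hd x| * |Real.cos (ω * (t - x))| :=
              abs_mul _ _
          _ ≤ ((1 / k) * μ₂) * 1 :=
              mul_le_mul (habs_hd x hxI) (Real.abs_cos_le_one _) (abs_nonneg _) (by positivity)
          _ = (1 / k) * μ₂ := mul_one _
      calc |∫ s in a..t, hd s * Real.cos (ω * (t - s))| ≤ (1 / k) * μ₂ * |t - a| :=
            intervalIntegral.norm_integral_le_of_norm_le_const hb1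
        _ ≤ (1 / k) * μ₂ * (b - a) := by
            rw [abs_of_nonneg (sub_nonneg.2 ht.1)]
            exact mul_le_mul_of_nonneg_left (by linarith [ht.2]) (by positivity)
    calc |∫ s in a..t, h s * Real.sin (ω * (t - s))|
        ≤ |(1 / ω) * h t - (1 / ω) * (h a * Real.cos (ω * (t - a)))| +
          |∫ s in a..t, (1 / ω) * (hd s * Real.cos (ω * (t - s)))| := by
          rw [hE]; exact abs_sub _ _
      _ ≤ (|(1 / ω) * h t| + |(1 / ω) * (h a * Real.cos (ω * (t - a)))|) +
          |∫ s in a..t, (1 / ω) * (hd s * Real.cos (ω * (t - s)))| := by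
          gcongr
          exact abs_sub _ _
      _ ≤ (1 / ω) * ((1 / k) * μ₁) + (1 / ω) * ((1 / k) * |f'' a|) +
          (1 / ω) * ((1 / k) * μ₂ * (b - a)) := by
          exact add_le_add (add_le_add c1 c2) c3
      _ = (1 / ω) * ((1 / k) * μ₁ + (1 / k) * |f'' a| + (1 / k) * μ₂ * (b - a)) := by ring
  -- integration by parts bound for the boundary integral
  have hKbound : |∫ s in a..b, h s * Real.cos (ω * (b - s))| ≤
      (1 / ω) * ((1 / k) * |f'' a| + (1 / k) * μ₂ * (b - a)) := by
    have hG : ∀ s ∈ Icc a b, HasDerivWithinAt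
        (fun s => (1 / ω) * (h s * Real.sin (ω * (b - s))))
        ((1 / ω) * (hd s * Real.sin (ω * (b - s))) - h s * Real.cos (ω * (b - s)))
        (Icc a b) s := by
      intro s hs
      have harg : HasDerivWithinAt (fun s : ℝ => ω * (b - s)) (-ω) (Icc a b) s := by
        simpa using ((hasDerivWithinAt_id s (Icc a b)).const_sub b).const_mul ω
      have key := ((hh s hs).mul harg.sin).const_mul (1 / ω)
      have hval : (1 / ω) * (hd s * Real.sin (ω * (b - s))) - h s * Real.cos (ω * (b - s)) =
          (1 / ω) * (hd s * Real.sin (ω * (b - s)) +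
            h s * (Real.cos (ω * (b - s)) * -ω)) := by
        field_simp
        ring
      rw [hval]
      exact key
    have hcosbc : Continuous fun s : ℝ => Real.cos (ω * (b - s)) :=
      Real.continuous_cos.comp (continuous_const.mul (continuous_const.sub continuous_id))
    have hsinbc : Continuous fun s : ℝ => Real.sin (ω * (b - s)) :=
      Real.continuous_sin.comp (continuous_const.mul (continuous_const.sub continuous_id))
    have hcint1 : ContinuousOn (fun s => (1 / ω) * (hd s * Real.sin (ω * (b - s)))) (Icc a b) :=
      continuousOn_const.mul (hchd.mul hsinbc.continuousOn)
    have hcint2 : ContinuousOn (fun s => h s * Real.cos (ω * (b - s))) (Icc a b) :=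
      hch.mul hcosbc.continuousOn
    have hftc := myFTC hG (hcint1.sub hcint2) hbI
    rw [intervalIntegral.integral_sub
      (hcint1.intervalIntegrable_of_Icc hab.le)
      (hcint2.intervalIntegrable_of_Icc hab.le)] at hftc
    simp only [sub_self, mul_zero, Real.sin_zero] at hftc
    have hE : (∫ s in a..b, h s * Real.cos (ω * (b - s))) =
        (1 / ω) * (h a * Real.sin (ω * (b - a))) +
          ∫ s in a..b, (1 / ω) * (hd s * Real.sin (ω * (b - s))) := by
      linarith [hftc]
    have c2 : |(1 / ω) * (h a * Real.sin (ω * (b - a)))| ≤ (1 / ω) * ((1 / k) * |f'' a|) := by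
      rw [abs_mul, abs_of_pos (by positivity : (0:ℝ) < 1 / ω), abs_mul, habs_ha]
      apply mul_le_mul_of_nonneg_left _ (by positivity)
      calc (1 / k) * |f'' a| * |Real.sin (ω * (b - a))| ≤ (1 / k) * |f'' a| * 1 :=
            mul_le_mul_of_nonneg_left (Real.abs_sin_le_one _) (by positivity)
        _ = (1 / k) * |f'' a| := mul_one _
    have c3 : |∫ s in a..b, (1 / ω) * (hd s * Real.sin (ω * (b - s)))| ≤
        (1 / ω) * ((1 / k) * μ₂ * (b - a)) := by
      rw [intervalIntegral.integral_const_mul, abs_mul,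
        abs_of_pos (by positivity : (0:ℝ) < 1 / ω)]
      apply mul_le_mul_of_nonneg_left _ (by positivity)
      have hb1 : ∀ x ∈ Set.uIoc a b, ‖hd x * Real.sin (ω * (b - x))‖ ≤ (1 / k) * μ₂ := by
        intro x hx
        rw [Set.uIoc_of_le hab.le] at hx
        have hxI : x ∈ Icc a b := ⟨hx.1.le, hx.2⟩
        calc ‖hd x * Real.sin (ω * (b - x))‖ = |hd x| * |Real.sin (ω * (b - x))| :=
              abs_mul _ _
          _ ≤ ((1 / k) * μ₂) * 1 :=
              mul_le_mul (habs_hd x hxI) (Real.abs_sin_le_one _) (abs_nonneg _) (by positivity)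
          _ = (1 / k) * μ₂ := mul_one _
      calc |∫ s in a..b, hd s * Real.sin (ω * (b - s))| ≤ (1 / k) * μ₂ * |b - a| :=
            intervalIntegral.norm_integral_le_of_norm_le_const hb1
        _ = (1 / k) * μ₂ * (b - a) := by rw [abs_of_nonneg hc.le]
    calc |∫ s in a..b, h s * Real.cos (ω * (b - s))|
        ≤ |(1 / ω) * (h a * Real.sin (ω * (b - a)))| +
          |∫ s in a..b, (1 / ω) * (hd s * Real.sin (ω * (b - s)))| := by
          rw [hE]; exact abs_add_le _ _
      _ ≤ (1 / ω) * ((1 / k) * |f'' a|) + (1 / ω) * ((1 / k) * μ₂ * (b - a)) :=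
          add_le_add c2 c3
      _ = (1 / ω) * ((1 / k) * |f'' a| + (1 / k) * μ₂ * (b - a)) := by ring
  -- bound for z a
  have hza : |ω * z a| ≤
      ((1 / ω) * ((1 / k) * |f'' a| + (1 / k) * μ₂ * (b - a))) / Real.sin lam := by
    rw [le_div_iff₀ hsinlam]
    calc |ω * z a| * Real.sin lam ≤ |ω * z a| * |Real.sin (ω * (b - a))| :=
          mul_le_mul_of_nonneg_left hsinΘ (abs_nonneg _)
      _ = |(ω * z a) * Real.sin (ω * (b - a))| := (abs_mul _ _).symm
      _ = |∫ s in a..b, h s * Real.cos (ω * (b - s))| := by rw [hzaEq]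
      _ ≤ (1 / ω) * ((1 / k) * |f'' a| + (1 / k) * μ₂ * (b - a)) := hKbound
  -- conclusion
  intro t ht
  show |z t| ≤ _
  have hr := hrep t ht
  have hWb := hWbound t ht
  have habsz : |ω * z t| ≤ |ω * z a| + |∫ s in a..t, h s * Real.sin (ω * (t - s))| := by
    rw [hr]
    refine (abs_add_le _ _).trans (add_le_add ?_ le_rfl)
    rw [abs_mul]
    calc |ω * z a| * |Real.cos (ω * (t - a))| ≤ |ω * z a| * 1 :=
          mul_le_mul_of_nonneg_left (Real.abs_cos_le_one _) (abs_nonneg _)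
      _ = |ω * z a| := mul_one _
  have hinv : (1:ℝ) / ω ^ 2 = ε / k := by rw [hω2, one_div_div]
  calc |z t| = (1 / ω) * |ω * z t| := by
        rw [abs_mul, abs_of_pos hωpos]; field_simp
    _ ≤ (1 / ω) * (|ω * z a| + |∫ s in a..t, h s * Real.sin (ω * (t - s))|) :=
        mul_le_mul_of_nonneg_left habsz (by positivity)
    _ ≤ (1 / ω) * (((1 / ω) * ((1 / k) * |f'' a| + (1 / k) * μ₂ * (b - a))) / Real.sin lam +
          (1 / ω) * ((1 / k) * μ₁ + (1 / k) * |f'' a| + (1 / k) * μ₂ * (b - a))) :=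
        mul_le_mul_of_nonneg_left (add_le_add hza hWb) (by positivity)
    _ = (1 / ω ^ 2) * ((1 / Real.sin lam) * ((1 / k) * (|f'' a| + μ₂ * (b - a))) +
          (1 / k) * (μ₁ + |f'' a| + μ₂ * (b - a))) := by ring
    _ = ε / k ^ 2 * ((1 / Real.sin lam) * (|f'' a| + μ₂ * (b - a)) +
          (μ₁ + |f'' a| + μ₂ * (b - a))) := by rw [hinv]; ring
end

section
/- Let $a<b$, $k>0$, $0<\lambda\le\pi/2$, $n\in\mathbb{N}$, and $\epsilon\in J_n=[\,k((b-a)/((n+1)\pi-\lambda))^2,\; k((b-a)/(n\pi+\lambda))^2\,]$. Then the solution $y_\epsilon(t)=\dfrac{-e^a\cos[\sqrt{k/\epsilon}\,(b-t)]+e^b\cos[\sqrt{k/\epsilon}\,(t-a)]}{\sqrt{k/\epsilon}\,(k+\epsilon)\,\sin[\sqrt{k/\epsilon}\,(b-a)]}+\dfrac{e^t}{k+\epsilon}$ of the Neumann problem $\epsilon y''+ky=e^t$, $y'(a)=y'(b)=0$ satisfies for all $t\in[a,b]$: $\left|y_\epsilon(t)-\dfrac{e^t}{k+\epsilon}\right|\le\dfrac{e^a+e^b}{(k+\epsilon)\sin\lambda}\sqrt{\epsilon/k}$;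 in particular, for $\epsilon_n\in J_n$ the solutions $y_{\epsilon_n}$ converge uniformly on $[a,b]$ to $u(t)=e^t/k$ as $n\to\infty$. -/
open Real Set

/-- The explicit solution of the Neumann problem `ε y'' + k y = eᵗ`,
`y'(a) = y'(b) = 0`:
`y_ε(t) = (-eᵃ cos(√(k/ε)(b-t)) + eᵇ cos(√(k/ε)(t-a))) / (√(k/ε)(k+ε) sin(√(k/ε)(b-a)))
          + eᵗ/(k+ε)`. -/
noncomputable def yExp (a b k ε : ℝ) (t : ℝ) : ℝ :=
  (-Real.exp a * Real.cos (Real.sqrt (k / ε) * (b - t)) +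
      Real.exp b * Real.cos (Real.sqrt (k / ε) * (t - a))) /
    (Real.sqrt (k / ε) * (k + ε) * Real.sin (Real.sqrt (k / ε) * (b - a))) +
  Real.exp t / (k + ε)

/-- On `[nπ+λ, (n+1)π-λ]` we have `|sin x| ≥ sin λ`. -/
lemma aux_sin_ge (lam x : ℝ) (hlam : 0 < lam) (hlam' : lam ≤ π / 2) (n : ℕ)
    (h1 : n * π + lam ≤ x) (h2 : x ≤ (n + 1) * π - lam) :
    Real.sin lam ≤ |Real.sin x| := by
  set y := x - n * π with hy
  have hxy : x = y + (n : ℤ) * π := by push_cast [hy]; ring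
  have hsin : |Real.sin x| = |Real.sin y| := by
    rw [hxy, Real.sin_add_int_mul_pi, abs_mul]
    simp
  rw [hsin]
  have hy1 : lam ≤ y := by simp only [hy]; linarith
  have hy2 : y ≤ π - lam := by simp only [hy]; linarith
  have hpi := Real.pi_pos
  have key : Real.sin lam ≤ Real.sin y := by
    rcases le_or_gt y (π / 2) with h | h
    · exact Real.strictMonoOn_sin.monotoneOn ⟨by linarith, hlam'⟩ ⟨by linarith, h⟩ hy1
    · rw [← Real.sin_pi_sub y]
      exact Real.strictMonoOn_sin.monotoneOn ⟨by linarith, hlam'⟩ ⟨by linarith, by linarith⟩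
        (by linarith)
  calc Real.sin lam ≤ Real.sin y := key
    _ ≤ |Real.sin y| := le_abs_self _

/-- Positivity of `ε` and the pointwise bound. -/
lemma aux_key (a b k lam : ℝ) (hab : a < b) (hk : 0 < k)
    (hlam : 0 < lam) (hlam' : lam ≤ π / 2) (n : ℕ) (ε : ℝ)
    (hε : ε ∈ Icc (k * ((b - a) / ((n + 1) * π - lam)) ^ 2)
        (k * ((b - a) / (n * π + lam)) ^ 2)) :
    0 < ε ∧ ∀ t ∈ Icc a b,
        |yExp a b k ε t - Real.exp t / (k + ε)| ≤
          (Real.exp a + Real.exp b) / ((k + ε) * Real.sin lam) * Real.sqrt (ε / k) := by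
  have hpi := Real.pi_pos
  have hn0 : (0:ℝ) ≤ (n:ℝ) := Nat.cast_nonneg n
  have hba : 0 < b - a := by linarith
  have hd1 : 0 < (n + 1) * π - lam := by nlinarith
  have hd2 : 0 < n * π + lam := by nlinarith
  have hεpos : 0 < ε := lt_of_lt_of_le (by positivity) hε.1
  have hkε : 0 < k / ε := by positivity
  set ω := Real.sqrt (k / ε) with hω
  have hωpos : 0 < ω := Real.sqrt_pos.mpr hkε
  -- lower bound: n π + lam ≤ ω (b - a)
  have hlow : n * π + lam ≤ ω * (b - a) := by
    have h1 : (n * π + lam) / (b - a) ≤ ω := by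
      rw [hω, ← Real.sqrt_sq (le_of_lt (by positivity : (0:ℝ) < (n * π + lam) / (b - a)))]
      apply Real.sqrt_le_sqrt
      rw [div_pow, div_le_div_iff₀ (by positivity) hεpos]
      have h2 := hε.2
      rw [div_pow, ← mul_div_assoc, le_div_iff₀ (by positivity)] at h2
      nlinarith
    calc n * π + lam = (n * π + lam) / (b - a) * (b - a) := by field_simp
      _ ≤ ω * (b - a) := by gcongr
  -- upper bound: ω (b - a) ≤ (n+1) π - lam
  have hhigh : ω * (b - a) ≤ (n + 1) * π - lam := by
    have h1 : ω ≤ ((n + 1) * π - lam) / (b - a) := by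
      rw [hω, ← Real.sqrt_sq (le_of_lt (by positivity : (0:ℝ) < ((n + 1) * π - lam) / (b - a)))]
      apply Real.sqrt_le_sqrt
      rw [div_pow, div_le_div_iff₀ hεpos (by positivity)]
      have h2 := hε.1
      rw [div_pow, ← mul_div_assoc, div_le_iff₀ (by positivity)] at h2
      nlinarith
    calc ω * (b - a) ≤ ((n + 1) * π - lam) / (b - a) * (b - a) := by gcongr
      _ = (n + 1) * π - lam := by field_simp
  have hsin : Real.sin lam ≤ |Real.sin (ω * (b - a))| :=
    aux_sin_ge lam _ hlam hlam' n hlow hhigh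
  have hsinlam : 0 < Real.sin lam := Real.sin_pos_of_pos_of_lt_pi hlam (by linarith)
  refine ⟨hεpos, fun t ht => ?_⟩
  have hkεsum : 0 < k + ε := by linarith
  have hsimp : yExp a b k ε t - Real.exp t / (k + ε) =
      (-Real.exp a * Real.cos (ω * (b - t)) + Real.exp b * Real.cos (ω * (t - a))) /
        (ω * (k + ε) * Real.sin (ω * (b - a))) := by
    simp [yExp, hω]
  rw [hsimp, abs_div]
  have hnum : |(-Real.exp a * Real.cos (ω * (b - t)) + Real.exp b * Real.cos (ω * (t - a)))| ≤
      Real.exp a + Real.exp b := by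
    have h1 := Real.abs_cos_le_one (ω * (b - t))
    have h2 := Real.abs_cos_le_one (ω * (t - a))
    calc |(-Real.exp a * Real.cos (ω * (b - t)) + Real.exp b * Real.cos (ω * (t - a)))|
        ≤ |(-Real.exp a * Real.cos (ω * (b - t)))| + |Real.exp b * Real.cos (ω * (t - a))| :=
          abs_add_le _ _
      _ = Real.exp a * |Real.cos (ω * (b - t))| + Real.exp b * |Real.cos (ω * (t - a))| := by
          rw [abs_mul, abs_mul, abs_neg, abs_of_pos (Real.exp_pos a),
            abs_of_pos (Real.exp_pos b)]
      _ ≤ Real.exp a * 1 + Real.exp b * 1 := by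
          gcongr <;> first
            | exact (Real.exp_pos a).le | exact (Real.exp_pos b).le | exact h1 | exact h2
      _ = Real.exp a + Real.exp b := by ring
  have hden : ω * (k + ε) * Real.sin lam ≤ |ω * (k + ε) * Real.sin (ω * (b - a))| := by
    rw [abs_mul, abs_mul, abs_of_pos hωpos, abs_of_pos hkεsum]
    gcongr
  have hstep : |(-Real.exp a * Real.cos (ω * (b - t)) + Real.exp b * Real.cos (ω * (t - a)))| /
      |ω * (k + ε) * Real.sin (ω * (b - a))| ≤
      (Real.exp a + Real.exp b) / (ω * (k + ε) * Real.sin lam) :=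
    div_le_div₀ (by positivity) hnum (by positivity) hden
  refine hstep.trans (le_of_eq ?_)
  have hinv : Real.sqrt (ε / k) = ω⁻¹ := by
    rw [hω, ← Real.sqrt_inv]
    congr 1
    field_simp
  rw [hinv, inv_eq_one_div, mul_one_div, div_div]
  ring_nf

/-- for `ε ∈ Jₙ`, the solution `yExp` of the Neumann problem
`ε y'' + k y = eᵗ`, `y'(a) = y'(b) = 0` satisfies for all `t ∈ [a,b]`
`|y_ε(t) - eᵗ/(k+ε)| ≤ ((eᵃ + eᵇ)/((k+ε) sin λ)) √(ε/k)`; in particular, for `εₙ ∈ Jₙ`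
the solutions `y_{εₙ}` converge uniformly on `[a,b]` to `u(t) = eᵗ/k` as `n → ∞`. -/
theorem stmt_15 (a b k lam : ℝ) (hab : a < b) (hk : 0 < k)
    (hlam : 0 < lam) (hlam' : lam ≤ π / 2) :
    (∀ (n : ℕ) (ε : ℝ),
      ε ∈ Icc (k * ((b - a) / ((n + 1) * π - lam)) ^ 2)
        (k * ((b - a) / (n * π + lam)) ^ 2) →
      ∀ t ∈ Icc a b,
        |yExp a b k ε t - Real.exp t / (k + ε)| ≤
          (Real.exp a + Real.exp b) / ((k + ε) * Real.sin lam) * Real.sqrt (ε / k)) ∧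
    (∀ ε : ℕ → ℝ,
      (∀ n : ℕ, ε n ∈ Icc (k * ((b - a) / ((n + 1) * π - lam)) ^ 2)
        (k * ((b - a) / (n * π + lam)) ^ 2)) →
      TendstoUniformlyOn (fun n t => yExp a b k (ε n) t)
        (fun t => Real.exp t / k) Filter.atTop (Icc a b)) := by
  have hpi := Real.pi_pos
  have hsinlam : 0 < Real.sin lam := Real.sin_pos_of_pos_of_lt_pi hlam (by linarith)
  constructor
  · intro n ε hε
    exact (aux_key a b k lam hab hk hlam hlam' n ε hε).2
  · intro ε hε
    have hεpos : ∀ n, 0 < ε n := fun n => (aux_key a b k lam hab hk hlam hlam' n (ε n) (hε n)).1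
    -- ε n → 0
    have hub : Filter.Tendsto (fun n : ℕ => k * ((b - a) / (n * π + lam)) ^ 2)
        Filter.atTop (nhds 0) := by
      have h1 : Filter.Tendsto (fun n : ℕ => ((n : ℝ) * π + lam) ^ 2)
          Filter.atTop Filter.atTop := by
        have hbase : Filter.Tendsto (fun n : ℕ => (n : ℝ) * π + lam)
            Filter.atTop Filter.atTop :=
          Filter.tendsto_atTop_add_const_right _ _
            (Filter.Tendsto.atTop_mul_const hpi tendsto_natCast_atTop_atTop)
        have := hbase.atTop_mul_atTop₀ hbase
        refine this.congr fun n => ?_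
        ring
      have h2 : Filter.Tendsto (fun n : ℕ => k * (b - a) ^ 2 / ((n : ℝ) * π + lam) ^ 2)
          Filter.atTop (nhds 0) := Filter.Tendsto.div_atTop tendsto_const_nhds h1
      refine h2.congr fun n => ?_
      rw [div_pow]
      ring
    have hε0 : Filter.Tendsto ε Filter.atTop (nhds 0) :=
      squeeze_zero (fun n => (hεpos n).le) (fun n => (hε n).2) hub
    -- the global bound tends to 0
    set g : ℕ → ℝ := fun n =>
      (Real.exp a + Real.exp b) / (k * Real.sin lam) * Real.sqrt (ε n / k) +
        Real.exp b * ε n / k ^ 2 with hg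
    have hg0 : Filter.Tendsto g Filter.atTop (nhds 0) := by
      have h1 : Filter.Tendsto (fun n => Real.sqrt (ε n / k)) Filter.atTop (nhds 0) := by
        have hdiv : Filter.Tendsto (fun n => ε n / k) Filter.atTop (nhds 0) := by
          simpa using hε0.div_const k
        have := (Real.continuous_sqrt.tendsto 0).comp hdiv
        simpa [Function.comp_def] using this
      have h2 : Filter.Tendsto
          (fun n => (Real.exp a + Real.exp b) / (k * Real.sin lam) * Real.sqrt (ε n / k))
          Filter.atTop (nhds 0) := by
        simpa using h1.const_mul ((Real.exp a + Real.exp b) / (k * Real.sin lam))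
      have h3 : Filter.Tendsto (fun n => Real.exp b * ε n / k ^ 2) Filter.atTop (nhds 0) := by
        simpa using (hε0.const_mul (Real.exp b)).div_const (k ^ 2)
      simpa using h2.add h3
    rw [Metric.tendstoUniformlyOn_iff]
    intro δ hδ
    filter_upwards [hg0.eventually (gt_mem_nhds hδ)] with n hn t ht
    rw [Real.dist_eq]
    have hbound := (aux_key a b k lam hab hk hlam hlam' n (ε n) (hε n)).2 t ht
    have hεn := hεpos n
    have hkε : 0 < k + ε n := by linarith
    have h4 : |Real.exp t / (k + ε n) - Real.exp t / k| ≤ Real.exp b * ε n / k ^ 2 := by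
      have heq : Real.exp t / (k + ε n) - Real.exp t / k =
          -(Real.exp t * ε n / (k * (k + ε n))) := by
        field_simp
        ring
      rw [heq, abs_neg, abs_of_nonneg (by positivity)]
      have het : Real.exp t ≤ Real.exp b := Real.exp_le_exp.mpr ht.2
      rw [div_le_div_iff₀ (by positivity) (by positivity)]
      have h6 : Real.exp t * ε n ≤ Real.exp b * ε n :=
        mul_le_mul_of_nonneg_right het hεn.le
      nlinarith [mul_nonneg (mul_nonneg (Real.exp_pos b).le hεn.le)
        (mul_nonneg hk.le hεn.le), sq_nonneg k, mul_le_mul_of_nonneg_right h6 (sq_nonneg k)]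
    have h5 : (Real.exp a + Real.exp b) / ((k + ε n) * Real.sin lam) * Real.sqrt (ε n / k) ≤
        (Real.exp a + Real.exp b) / (k * Real.sin lam) * Real.sqrt (ε n / k) := by
      apply mul_le_mul_of_nonneg_right _ (Real.sqrt_nonneg _)
      apply div_le_div_of_nonneg_left (by positivity) (by positivity)
      nlinarith
    calc |Real.exp t / k - yExp a b k (ε n) t|
        = |(yExp a b k (ε n) t - Real.exp t / (k + ε n)) +
            (Real.exp t / (k + ε n) - Real.exp t / k)| := by rw [← abs_neg]; ring_nf
      _ ≤ |yExp a b k (ε n) t - Real.exp t / (k + ε n)| +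
            |Real.exp t / (k + ε n) - Real.exp t / k| := abs_add_le _ _
      _ ≤ (Real.exp a + Real.exp b) / (k * Real.sin lam) * Real.sqrt (ε n / k) +
            Real.exp b * ε n / k ^ 2 := add_le_add (hbound.trans h5) h4
      _ = g n := rfl
      _ < δ := hn
end
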